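/- arXiv:1904.00808 — 4 statements merged into one kernel-verified Lean document; each statement's English description precedes it below -/
import Mathlib

section
/- Let (X,d,μ) be a metric measure space and suppose there exists N ∈ ℕ such that for every Lipschitz map φ : X → ℝ^N one has μ(ind φ) = 0. Then (X,d,μ) is a Lipschitz differentiability space, and the charts can be chosen with every chart dimension n_i ≤ N − 1. -/
open MeasureTheory Metric Set Filter Topology ENNReal NNReal
open scoped RealInnerProductSpace

noncomputable section

namespace BKO

/-- `ℝⁿ` with the Euclidean metric. -/
abbrev E (n : ℕ) : Type := EuclideanSpace ℝ (Fin n)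

variable {X : Type*} [MetricSpace X]

/-- A set `G ⊆ ℝ × X` is the graph of a curve fragment if all first coordinates lie
in `[0,1]` and it is the graph of a `2`-biLipschitz function defined on a subset of `[0,1]`. -/
def IsFragmentGraph (X : Type*) [MetricSpace X] (G : Set (ℝ × X)) : Prop :=
  (∀ p ∈ G, p.1 ∈ Set.Icc (0:ℝ) 1) ∧
  ∀ p ∈ G, ∀ q ∈ G, |p.1 - q.1| ≤ 2 * dist p.2 q.2 ∧ dist p.2 q.2 ≤ 2 * |p.1 - q.1|

/-- The space `Γ(X)` of curve fragments, identified with their graphs (nonempty compact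
subsets of `[0,1] × X`), with the Hausdorff metric `d_Γ(γ₁,γ₂) = d_H(gr γ₁, gr γ₂)`. -/
def Fragment (X : Type*) [MetricSpace X] : Type _ :=
  {G : TopologicalSpace.NonemptyCompacts (ℝ × X) // IsFragmentGraph X (G : Set (ℝ × X))}

instance : MetricSpace (Fragment X) :=
  inferInstanceAs (MetricSpace {G : TopologicalSpace.NonemptyCompacts (ℝ × X) // _})

instance : MeasurableSpace (Fragment X) := borel _
instance : BorelSpace (Fragment X) := ⟨rfl⟩

namespace Fragment

/-- The graph of a curve fragment. -/
def graph (γ : Fragment X) : Set (ℝ × X) := (γ.1 : Set (ℝ × X))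

/-- The (compact) domain of a curve fragment. -/
def dom (γ : Fragment X) : Set ℝ := Prod.fst '' γ.graph

/-- The image of a curve fragment. -/
def im (γ : Fragment X) : Set X := Prod.snd '' γ.graph

/-- The function `dom γ → X` determined by the graph (junk value off the domain). -/
def fn (γ : Fragment X) (t : ℝ) : X :=
  @dite X (∃ x, (t, x) ∈ γ.graph) (Classical.dec _)
    (fun h => h.choose) (fun _ => γ.1.nonempty.choose.2)

/-- `γ_* 𝓛¹`: the pushforward under `γ` of Lebesgue measure restricted to `dom γ`. -/
def measure [MeasurableSpace X] (γ : Fragment X) : Measure X :=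
  (volume.restrict γ.dom).map γ.fn

end Fragment

/-- The measure `ν(ℙ)`, `ν(ℙ)(B) = ∫ γ_*𝓛¹(B) dℙ(γ)`. -/
def nu [MeasurableSpace X] (ℙ : Measure (Fragment X)) : Measure X :=
  ℙ.bind Fragment.measure

/-- The cone `C(w,θ) = {v : |⟨v,w⟩| ≥ θ‖v‖}`. -/
def cone {n : ℕ} (w : E n) (θ : ℝ) : Set (E n) := {v | θ * ‖v‖ ≤ |⟪v, w⟫|}

/-- A cone in `ℝⁿ` is a set of the form `C(w,θ)` with `w ∈ Sⁿ⁻¹`, `θ ∈ (0,1)`. -/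
def IsCone {n : ℕ} (C : Set (E n)) : Prop :=
  ∃ (w : E n) (θ : ℝ), ‖w‖ = 1 ∧ θ ∈ Set.Ioo (0:ℝ) 1 ∧ C = cone w θ

/-- `γ` is a `C`-curve with respect to `φ`. -/
def IsConeCurve {n : ℕ} (φ : X → E n) (C : Set (E n)) (γ : Fragment X) : Prop :=
  ∃ δ > (0:ℝ), ∀ p ∈ γ.graph, ∀ q ∈ γ.graph,
    φ p.2 - φ q.2 ∈ C \ Metric.ball 0 (δ * |p.1 - q.1|)

/-- `ℙ` is a `C`-Alberti representation of `μ` with respect to `φ`. -/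
def IsConeAlbertiRep [MeasurableSpace X] {n : ℕ} (μ : Measure X) (φ : X → E n)
    (C : Set (E n)) (ℙ : Measure (Fragment X)) : Prop :=
  IsProbabilityMeasure ℙ ∧ μ ≪ nu ℙ ∧ ∀ᵐ γ ∂ℙ, IsConeCurve φ C γ

/-- `S` is `C`-null with respect to `φ`: every `C`-curve meets `S` in `𝓗¹`-measure zero. -/
def ConeNull [MeasurableSpace X] [BorelSpace X] {n : ℕ} (φ : X → E n) (C : Set (E n))
    (S : Set X) : Prop :=
  ∀ γ : Fragment X, IsConeCurve φ C γ → μH[1] (γ.im ∩ S) = 0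

/-- Cones `C₁,…,C_m` are independent. -/
def IndepCones {n m : ℕ} (C : Fin m → Set (E n)) : Prop :=
  ∀ v : Fin m → E n, (∀ i, v i ∈ C i ∧ v i ≠ 0) → LinearIndependent ℝ v

/-- `μ` has `n` independent Alberti representations. -/
def HasIndepAlberti [MeasurableSpace X] (μ : Measure X) (n : ℕ) : Prop :=
  ∃ φ : X → E n, (∃ K, LipschitzWith K φ) ∧ ∃ C : Fin n → Set (E n),
    (∀ i, IsCone (C i)) ∧ IndepCones C ∧ ∀ i, ∃ ℙ, IsConeAlbertiRep μ φ (C i) ℙ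

/-- The collection `𝒮(φ)` of singular sets. -/
def MemScal [MeasurableSpace X] [BorelSpace X] {n : ℕ} (φ : X → E n) (S : Set X) : Prop :=
  MeasurableSet S ∧ ∀ θ ∈ Set.Ioo (0:ℝ) 1, ∃ (m : ℕ) (S' : Fin m → Set X) (w : Fin m → E n),
    S = (⋃ i, S' i) ∧ ∀ i, MeasurableSet (S' i) ∧ ‖w i‖ = 1 ∧ ConeNull φ (cone (w i) θ) (S' i)

/-- `Lip(f,x) = limsup_{r→0⁺} sup_{d(x,y)≤r} |f(y)-f(x)|/r`. -/
def lipAt (f : X → ℝ) (x : X) : ℝ :=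
  Filter.limsup (fun r : ℝ => sSup ((fun y => |f y - f x| / r) '' Metric.closedBall x r))
    (𝓝[>] (0:ℝ))

/-- `ind φ = {x : Lip(D⬝φ, x) > 0 for all D ∈ Sⁿ⁻¹}`. -/
def indSet {n : ℕ} (φ : X → E n) : Set X :=
  {x | ∀ D : E n, ‖D‖ = 1 → 0 < lipAt (fun y => ⟪φ y, D⟫) x}

/-- `f` is differentiable with respect to `φ` at `x₀`, with a unique derivative. -/
def DiffWrtAt {n : ℕ} (φ : X → E n) (f : X → ℝ) (x₀ : X) : Prop :=
  ∃! L : E n →ₗ[ℝ] ℝ,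
    Filter.Tendsto (fun x => |f x - f x₀ - L (φ x - φ x₀)| / dist x x₀) (𝓝[≠] x₀) (𝓝 0)

/-- `(X,d,μ)` is a Lipschitz differentiability space, with all chart dimensions
satisfying the predicate `P`. -/
def IsLipDiffSpaceWith [MeasurableSpace X] (μ : Measure X) (P : ℕ → Prop) : Prop :=
  ∃ (N : ℕ → ℕ) (U : ℕ → Set X) (φ : (i : ℕ) → X → E (N i)),
    (∀ i, P (N i)) ∧ (∀ i, MeasurableSet (U i)) ∧ (⋃ i, U i) = Set.univ ∧
    (∀ i, ∃ K, LipschitzWith K (φ i)) ∧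
    ∀ f : X → ℝ, (∃ K, LipschitzWith K f) →
      ∀ i, ∀ᵐ x ∂μ, x ∈ U i → DiffWrtAt (φ i) f x

/-- `ρ` is an upper gradient of `f`. -/
def IsUpperGradient (f ρ : X → ℝ) : Prop :=
  ∀ γ : ℝ → X, LipschitzOnWith 1 γ (Set.Icc 0 1) →
    |f (γ 1) - f (γ 0)| ≤ ∫ t in Set.Icc (0:ℝ) 1, ρ (γ t)

/-- `ρ` is a `*`-upper gradient of `f`. -/
def IsStarUpperGradient (f ρ : X → ℝ) : Prop :=
  ∀ γ : Fragment X, LipschitzOnWith 1 γ.fn γ.dom →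
    ∀ᵐ t ∂(volume.restrict γ.dom),
      ∀ v : ℝ, HasDerivWithinAt (f ∘ γ.fn) v γ.dom t → |v| ≤ ρ (γ.fn t)

/-- The dyadic cube of side length `2^{-m}` in `[0,1)ⁿ` indexed by `k`. -/
def dyadicCube (n m : ℕ) (k : Fin n → Fin (2 ^ m)) : Set (E n) :=
  {x | ∀ i, (k i : ℝ) / 2 ^ m ≤ x i ∧ x i < ((k i : ℝ) + 1) / 2 ^ m}


/-! ### Auxiliary development -/

section LipAux

variable {Y : Type*} [MetricSpace Y]

/-- The set of difference quotients of `g` at `x` over the punctured ball of radius `q`. -/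
def rset (g : Y → ℝ) (x : Y) (q : ℝ) : Set ℝ :=
  (fun y => |g y - g x| / dist y x) '' (Metric.ball x q \ {x})

/-- Sup of difference quotients at scale `q`. -/
def Wq (g : Y → ℝ) (x : Y) (q : ℝ) : ℝ := sSup (rset g x q)

instance : Nonempty {q : ℚ // 0 < q} := ⟨⟨1, one_pos⟩⟩

/-- The pointwise lower Lipschitz constant as an inf over rational scales. -/
def lipInf (g : Y → ℝ) (x : Y) : ℝ := ⨅ q : {q : ℚ // 0 < q}, Wq g x (q : ℝ)

variable {g : Y → ℝ} {x : Y} {c : ℝ}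

lemma rset_bounds (hg : ∀ y z, |g y - g z| ≤ c * dist y z) {q : ℝ} :
    ∀ v ∈ rset g x q, 0 ≤ v ∧ v ≤ c := by
  rintro v ⟨y, ⟨_, hyx⟩, rfl⟩
  have hd : 0 < dist y x := dist_pos.2 (by simpa using hyx)
  constructor
  · positivity
  · rw [div_le_iff₀ hd]
    exact hg y x

lemma bddAbove_rset (hg : ∀ y z, |g y - g z| ≤ c * dist y z) {q : ℝ} :
    BddAbove (rset g x q) := ⟨c, fun v hv => (rset_bounds hg v hv).2⟩

lemma Wq_nonneg (hg : ∀ y z, |g y - g z| ≤ c * dist y z) {q : ℝ} : 0 ≤ Wq g x q :=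
  Real.sSup_nonneg fun v hv => (rset_bounds hg v hv).1

lemma bddBelow_Wq_range (hg : ∀ y z, |g y - g z| ≤ c * dist y z) :
    BddBelow (Set.range fun q : {q : ℚ // 0 < q} => Wq g x (q : ℝ)) :=
  ⟨0, by rintro v ⟨q, rfl⟩; exact Wq_nonneg hg⟩

lemma lipInf_nonneg (hg : ∀ y z, |g y - g z| ≤ c * dist y z) : 0 ≤ lipInf g x :=
  le_ciInf fun _ => Wq_nonneg hg

/-- The key identity: `lipAt` equals the inf over rational scales of sup of
difference quotients. -/
lemma lipAt_eq (hc : 0 ≤ c) (hg : ∀ y z, |g y - g z| ≤ c * dist y z) :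
    lipAt g x = lipInf g x := by
  set u : ℝ → ℝ := fun r => sSup ((fun y => |g y - g x| / r) '' Metric.closedBall x r) with hu
  have himb : ∀ r : ℝ, 0 < r → ∀ v ∈ (fun y => |g y - g x| / r) '' Metric.closedBall x r,
      v ≤ c := by
    rintro r hr v ⟨y, hy, rfl⟩
    rw [div_le_iff₀ hr]
    exact (hg y x).trans (mul_le_mul_of_nonneg_left (Metric.mem_closedBall.1 hy) hc)
  have hbdd : ∀ r : ℝ, 0 < r → BddAbove ((fun y => |g y - g x| / r) '' Metric.closedBall x r) :=
    fun r hr => ⟨c, fun v hv => himb r hr v hv⟩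
  have hu0 : ∀ r : ℝ, 0 < r → 0 ≤ u r := by
    intro r hr
    have : (0:ℝ) ∈ (fun y => |g y - g x| / r) '' Metric.closedBall x r :=
      ⟨x, Metric.mem_closedBall_self hr.le, by simp⟩
    exact le_csSup (hbdd r hr) this
  have huc : ∀ r : ℝ, 0 < r → u r ≤ c := fun r hr => Real.sSup_le (himb r hr) hc
  rw [lipAt, Filter.limsup_eq]
  set EB : Set ℝ := {a | ∀ᶠ r in 𝓝[>] (0:ℝ), u r ≤ a} with hEB
  have hEB0 : ∀ a ∈ EB, 0 ≤ a := by
    intro a ha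
    have ha' : ∀ᶠ r in 𝓝[>] (0:ℝ), u r ≤ a := ha
    obtain ⟨r, hra, hr⟩ := (ha'.and eventually_mem_nhdsWithin).exists
    exact (hu0 r hr).trans hra
  have hne : EB.Nonempty := by
    refine ⟨c, ?_⟩
    filter_upwards [self_mem_nhdsWithin] with r hr
    exact huc r hr
  apply le_antisymm
  · refine le_ciInf fun q => ?_
    refine csInf_le ⟨0, fun a ha => hEB0 a ha⟩ ?_
    have hq : (0:ℝ) < (q : ℚ) := by exact_mod_cast q.2
    show ∀ᶠ r in 𝓝[>] (0:ℝ), u r ≤ Wq g x (q : ℝ)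
    filter_upwards [Ioo_mem_nhdsGT_of_mem ⟨le_refl (0:ℝ), hq⟩] with r hr
    refine Real.sSup_le ?_ (Wq_nonneg hg)
    rintro v ⟨y, hy, rfl⟩
    rcases eq_or_ne y x with h | h
    · subst h; simpa using Wq_nonneg (q := ((q:ℚ):ℝ)) hg
    · have hd : 0 < dist y x := dist_pos.2 h
      have h1 : |g y - g x| / r ≤ |g y - g x| / dist y x :=
        div_le_div_of_nonneg_left (abs_nonneg _) hd (Metric.mem_closedBall.1 hy)
      refine h1.trans (le_csSup (bddAbove_rset hg) ⟨y, ⟨?_, h⟩, rfl⟩)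
      exact Metric.mem_ball.2 (lt_of_le_of_lt (Metric.mem_closedBall.1 hy) hr.2)
  · refine le_csInf hne fun a ha => ?_
    obtain ⟨δ, hδ, hsub⟩ := Metric.mem_nhdsWithin_iff.1 ha
    obtain ⟨q, hq0, hqδ⟩ := exists_rat_btwn hδ
    have hq0' : 0 < q := by exact_mod_cast hq0
    refine le_trans (ciInf_le (bddBelow_Wq_range hg) ⟨q, hq0'⟩) ?_
    refine Real.sSup_le ?_ (hEB0 a ha)
    rintro v ⟨y, ⟨hy, hyx⟩, rfl⟩
    have hyx' : y ≠ x := by simpa using hyx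
    have hd : 0 < dist y x := dist_pos.2 hyx'
    have hmem : dist y x ∈ Metric.ball (0:ℝ) δ ∩ Set.Ioi 0 := by
      constructor
      · rw [Metric.mem_ball, Real.dist_eq, sub_zero, abs_of_pos hd]
        exact lt_trans (Metric.mem_ball.1 hy) hqδ
      · exact hd
    have hua : u (dist y x) ≤ a := hsub hmem
    refine le_trans (le_csSup (hbdd _ hd) ?_) hua
    exact ⟨y, Metric.mem_closedBall.2 le_rfl, rfl⟩

end LipAux

section LipAux2

variable {Y : Type*} [MetricSpace Y] {g : Y → ℝ} {x : Y} {c : ℝ}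

lemma tendsto_ratio_of_lipAt_nonpos (hc : 0 ≤ c) (hg : ∀ y z, |g y - g z| ≤ c * dist y z)
    (h : lipAt g x ≤ 0) :
    Filter.Tendsto (fun y => |g y - g x| / dist y x) (𝓝[≠] x) (𝓝 0) := by
  rw [lipAt_eq hc hg] at h
  rw [Metric.tendsto_nhdsWithin_nhds]
  intro ε hε
  have h1 : lipInf g x < ε := lt_of_le_of_lt h hε
  obtain ⟨q, hq⟩ := exists_lt_of_ciInf_lt h1
  refine ⟨(q : ℚ), by exact_mod_cast q.2, ?_⟩
  intro y hy hdy
  have hmem : |g y - g x| / dist y x ∈ rset g x ((q:ℚ):ℝ) :=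
    ⟨y, ⟨Metric.mem_ball.2 hdy, hy⟩, rfl⟩
  have h2 : |g y - g x| / dist y x ≤ Wq g x ((q:ℚ):ℝ) := le_csSup (bddAbove_rset hg) hmem
  rw [Real.dist_eq, sub_zero]
  calc |(|g y - g x| / dist y x)| = |g y - g x| / dist y x := abs_of_nonneg (by positivity)
  _ ≤ _ := h2
  _ < ε := hq

lemma lipAt_nonpos_of_tendsto (hc : 0 ≤ c) (hg : ∀ y z, |g y - g z| ≤ c * dist y z)
    (h : Filter.Tendsto (fun y => |g y - g x| / dist y x) (𝓝[≠] x) (𝓝 0)) :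
    lipAt g x ≤ 0 := by
  rw [lipAt_eq hc hg]
  refine le_of_forall_pos_le_add fun ε hε => ?_
  rw [zero_add]
  obtain ⟨δ, hδ, H⟩ := Metric.tendsto_nhdsWithin_nhds.1 h ε hε
  obtain ⟨q, hq0, hqδ⟩ := exists_rat_btwn hδ
  have hq0' : 0 < q := by exact_mod_cast hq0
  refine le_trans (ciInf_le (bddBelow_Wq_range hg) ⟨q, hq0'⟩) ?_
  refine Real.sSup_le ?_ hε.le
  rintro v ⟨y, ⟨hy, hyx⟩, rfl⟩
  have hyx' : y ∉ ({x} : Set Y) := hyx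
  have := H hyx' (lt_trans (Metric.mem_ball.1 hy) hqδ)
  rw [Real.dist_eq, sub_zero] at this
  exact (le_abs_self _).trans this.le

lemma lipAt_nonneg' (hc : 0 ≤ c) (hg : ∀ y z, |g y - g z| ≤ c * dist y z) :
    0 ≤ lipAt g x := by
  rw [lipAt_eq hc hg]; exact lipInf_nonneg hg

lemma lipAt_le_of_close {g₁ g₂ : Y → ℝ} {c₁ c₂ t : ℝ} (hc1 : 0 ≤ c₁) (hc2 : 0 ≤ c₂)
    (hg₁ : ∀ y z, |g₁ y - g₁ z| ≤ c₁ * dist y z) (hg₂ : ∀ y z, |g₂ y - g₂ z| ≤ c₂ * dist y z)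
    (ht : 0 ≤ t) (hcl : ∀ y z, |(g₁ y - g₁ z) - (g₂ y - g₂ z)| ≤ t * dist y z) :
    lipAt g₁ x ≤ lipAt g₂ x + t := by
  rw [lipAt_eq hc1 hg₁, lipAt_eq hc2 hg₂]
  rw [← sub_le_iff_le_add]
  refine le_ciInf fun q => ?_
  rw [sub_le_iff_le_add]
  refine le_trans (ciInf_le (bddBelow_Wq_range hg₁) q) ?_
  refine Real.sSup_le ?_ (add_nonneg (Wq_nonneg hg₂) ht)
  rintro v ⟨y, ⟨hy, hyx⟩, rfl⟩
  have hd : 0 < dist y x := dist_pos.2 (by simpa using hyx)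
  have h1 : |g₁ y - g₁ x| ≤ |g₂ y - g₂ x| + t * dist y x := by
    have := hcl y x
    have habs := abs_sub_abs_le_abs_sub (g₁ y - g₁ x) (g₂ y - g₂ x)
    linarith
  have h2 : |g₁ y - g₁ x| / dist y x ≤ |g₂ y - g₂ x| / dist y x + t := by
    have : (|g₂ y - g₂ x| + t * dist y x) / dist y x = |g₂ y - g₂ x| / dist y x + t := by
      field_simp
    calc |g₁ y - g₁ x| / dist y x ≤ (|g₂ y - g₂ x| + t * dist y x) / dist y x :=
          div_le_div_of_nonneg_right h1 hd.le |>.trans_eq rfl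
    _ = _ := this
  refine h2.trans (add_le_add_left (le_csSup (bddAbove_rset hg₂) ⟨y, ⟨hy, hyx⟩, rfl⟩) t)

end LipAux2

section EuclidAux

variable {n : ℕ}

/-- Append a real coordinate to a Euclidean vector. -/
def snocE (a : E n) (s : ℝ) : E (n+1) :=
  (WithLp.equiv 2 _).symm (Fin.snoc (WithLp.equiv 2 _ a) s)

/-- The first `n` coordinates of a Euclidean vector. -/
def frontE (D : E (n+1)) : E n :=
  (WithLp.equiv 2 _).symm (fun i => D i.castSucc)

@[simp] lemma snocE_castSucc (a : E n) (s : ℝ) (i : Fin n) :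
    snocE a s i.castSucc = a i := by
  simp [snocE, WithLp.equiv_symm_apply, WithLp.equiv_apply, Fin.snoc_castSucc]

@[simp] lemma snocE_last (a : E n) (s : ℝ) : snocE a s (Fin.last n) = s := by
  simp [snocE, WithLp.equiv_symm_apply, Fin.snoc_last]

@[simp] lemma frontE_apply (D : E (n+1)) (i : Fin n) : frontE D i = D i.castSucc := by
  simp [frontE, WithLp.equiv_symm_apply]

lemma real_inner_euclid (v w : E n) : ⟪v, w⟫ = ∑ i, v i * w i := by
  simp [PiLp.inner_apply, RCLike.inner_apply, conj_trivial]
  exact Finset.sum_congr rfl fun _ _ => mul_comm _ _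

lemma euclid_decomp (v : E n) : v = ∑ i, v i • EuclideanSpace.single i (1:ℝ) := by
  have h := (EuclideanSpace.basisFun (Fin n) ℝ).sum_repr v
  simpa [EuclideanSpace.basisFun_apply, EuclideanSpace.basisFun_repr] using h.symm

lemma linmap_eq_sum (L : E n →ₗ[ℝ] ℝ) (v : E n) :
    L v = ∑ i, v i * L (EuclideanSpace.single i (1:ℝ)) := by
  conv_lhs => rw [euclid_decomp v]
  rw [map_sum]
  simp [smul_eq_mul]

lemma norm_snocE_sub (a b : E n) (s t : ℝ) :
    ‖snocE a s - snocE b t‖ ≤ ‖a - b‖ + |s - t| := by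
  have hab : ‖a - b‖ = Real.sqrt (∑ i, ‖(a - b) i‖ ^ 2) := EuclideanSpace.norm_eq _
  have e1 : ‖snocE a s - snocE b t‖
      = Real.sqrt (∑ i : Fin (n+1), ‖(snocE a s - snocE b t) i‖ ^ 2) :=
    EuclideanSpace.norm_eq _
  rw [Fin.sum_univ_castSucc] at e1
  have e2 : ∀ i : Fin n, ‖(snocE a s - snocE b t) i.castSucc‖ ^ 2 = ‖(a - b) i‖ ^ 2 := by
    intro i; rw [PiLp.sub_apply, snocE_castSucc, snocE_castSucc, ← PiLp.sub_apply]
  have e3 : ‖(snocE a s - snocE b t) (Fin.last n)‖ ^ 2 = |s - t| ^ 2 := by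
    rw [PiLp.sub_apply, snocE_last, snocE_last, Real.norm_eq_abs]
  rw [Finset.sum_congr rfl (fun i _ => e2 i), e3] at e1
  have hS : ∑ i, ‖(a - b) i‖ ^ 2 = ‖a - b‖ ^ 2 := by
    rw [hab, Real.sq_sqrt (by positivity)]
  rw [hS] at e1
  rw [e1]
  have h2 : ‖a - b‖ ^ 2 + |s - t| ^ 2 ≤ (‖a - b‖ + |s - t|) ^ 2 := by
    nlinarith [norm_nonneg (a - b), abs_nonneg (s - t)]
  calc Real.sqrt (‖a - b‖ ^ 2 + |s - t| ^ 2) ≤ Real.sqrt ((‖a - b‖ + |s - t|) ^ 2) :=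
        Real.sqrt_le_sqrt h2
  _ = ‖a - b‖ + |s - t| := Real.sqrt_sq (by positivity)

lemma inner_snocE (a : E n) (s : ℝ) (D : E (n+1)) :
    ⟪snocE a s, D⟫ = ⟪a, frontE D⟫ + s * D (Fin.last n) := by
  rw [real_inner_euclid, real_inner_euclid, Fin.sum_univ_castSucc]
  simp

lemma norm_frontE {D : E (n+1)} (h : D (Fin.last n) = 0) : ‖frontE D‖ = ‖D‖ := by
  have h1 : ‖frontE D‖ = Real.sqrt (∑ i : Fin n, ‖frontE D i‖ ^ 2) := EuclideanSpace.norm_eq _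
  have h2 : ‖D‖ = Real.sqrt (∑ i : Fin (n+1), ‖D i‖ ^ 2) := EuclideanSpace.norm_eq _
  rw [Fin.sum_univ_castSucc, h] at h2
  rw [h1, h2]
  simp

end EuclidAux

section DiffCore

variable {Z : Type*} [MetricSpace Z]

lemma inner_comp_bound {m : ℕ} {Ψ : Z → E m} {K : ℝ}
    (hK : ∀ y z, dist (Ψ y) (Ψ z) ≤ K * dist y z) (D : E m) :
    ∀ y z, |⟪Ψ y, D⟫ - ⟪Ψ z, D⟫| ≤ (K * ‖D‖) * dist y z := by
  intro y z
  have h1 : ⟪Ψ y, D⟫ - ⟪Ψ z, D⟫ = ⟪Ψ y - Ψ z, D⟫ := (inner_sub_left _ _ _).symm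
  rw [h1]
  calc |⟪Ψ y - Ψ z, D⟫| ≤ ‖Ψ y - Ψ z‖ * ‖D‖ := abs_real_inner_le_norm _ _
  _ = dist (Ψ y) (Ψ z) * ‖D‖ := by rw [dist_eq_norm]
  _ ≤ (K * dist y z) * ‖D‖ := mul_le_mul_of_nonneg_right (hK y z) (norm_nonneg D)
  _ = (K * ‖D‖) * dist y z := by ring

variable [MeasurableSpace Z]

lemma diff_on_indSet (μ : Measure Z) {n : ℕ}
    (hN : ∀ Φ : Z → E (n+1), (∃ K, LipschitzWith K Φ) → μ (indSet Φ) = 0)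
    (ψ : Z → E n) (hψ : ∃ K, LipschitzWith K ψ) (f : Z → ℝ) (hf : ∃ K, LipschitzWith K f) :
    ∀ᵐ x ∂μ, x ∈ indSet ψ → DiffWrtAt ψ f x := by
  obtain ⟨Kψ, hKψ⟩ := hψ
  obtain ⟨Kf, hKf⟩ := hf
  set Ψ : Z → E (n+1) := fun x => snocE (ψ x) (f x) with hΨdef
  have hψd : ∀ y z, dist (ψ y) (ψ z) ≤ (Kψ : ℝ) * dist y z := fun y z => hKψ.dist_le_mul y z
  have hfd : ∀ y z, |f y - f z| ≤ (Kf : ℝ) * dist y z := by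
    intro y z
    have := hKf.dist_le_mul y z
    rwa [Real.dist_eq] at this
  have hΨd : ∀ y z, dist (Ψ y) (Ψ z) ≤ ((Kψ : ℝ) + (Kf : ℝ)) * dist y z := by
    intro y z
    rw [dist_eq_norm]
    calc ‖Ψ y - Ψ z‖ ≤ ‖ψ y - ψ z‖ + |f y - f z| := norm_snocE_sub _ _ _ _
    _ = dist (ψ y) (ψ z) + |f y - f z| := by rw [dist_eq_norm]
    _ ≤ (Kψ : ℝ) * dist y z + (Kf : ℝ) * dist y z := add_le_add (hψd y z) (hfd y z)
    _ = _ := by ring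
  have hΨlip : LipschitzWith (Kψ + Kf) Ψ := by
    apply LipschitzWith.of_dist_le_mul
    intro y z
    calc dist (Ψ y) (Ψ z) ≤ ((Kψ : ℝ) + (Kf : ℝ)) * dist y z := hΨd y z
    _ = ((Kψ + Kf : ℝ≥0) : ℝ) * dist y z := by push_cast; ring
  have h0 := hN Ψ ⟨_, hΨlip⟩
  have hae : ∀ᵐ x ∂μ, x ∉ indSet Ψ := by
    rw [ae_iff]
    simpa [not_not, Set.setOf_mem_eq] using h0
  set Kr : ℝ := (Kψ : ℝ) + (Kf : ℝ) with hKr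
  have hKr0 : (0:ℝ) ≤ Kr := by positivity
  have hKψ0 : (0:ℝ) ≤ (Kψ : ℝ) := (Kψ : ℝ≥0).coe_nonneg
  filter_upwards [hae] with x hx hxψ
  simp only [indSet, Set.mem_setOf_eq] at hx hxψ
  push_neg at hx
  obtain ⟨D, hD1, hD2⟩ := hx
  set g : Z → ℝ := fun y => ⟪Ψ y, D⟫ with hgdef
  have hgb : ∀ y z, |g y - g z| ≤ (Kr * ‖D‖) * dist y z := inner_comp_bound hΨd D
  have hg0 : (0:ℝ) ≤ Kr * ‖D‖ := by positivity
  have hgnp : lipAt g x ≤ 0 := hD2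
  have htend : Filter.Tendsto (fun y => |g y - g x| / dist y x) (𝓝[≠] x) (𝓝 0) :=
    tendsto_ratio_of_lipAt_nonpos hg0 hgb hgnp
  by_cases hD0 : D (Fin.last n) = 0
  · exfalso
    have hfront : ‖frontE D‖ = 1 := by rw [norm_frontE hD0, hD1]
    have hpos := hxψ (frontE D) hfront
    have hfun : (fun y => ⟪ψ y, frontE D⟫) = g := by
      funext y
      have : g y = ⟪snocE (ψ y) (f y), D⟫ := rfl
      rw [this, inner_snocE, hD0]
      ring
    rw [hfun] at hpos
    exact absurd hgnp (not_le.2 hpos)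
  · set d0 : ℝ := D (Fin.last n) with hd0def
    set w : E n := frontE D with hwdef
    set L0 : E n →ₗ[ℝ] ℝ := (-d0⁻¹) • (innerSL ℝ w).toLinearMap with hL0def
    have hL0 : ∀ v : E n, L0 v = -d0⁻¹ * ⟪v, w⟫ := by
      intro v
      simp only [hL0def, LinearMap.smul_apply, ContinuousLinearMap.coe_coe, innerSL_apply_apply,
        smul_eq_mul]
      rw [real_inner_comm]
    have key : ∀ y, f y - f x - L0 (ψ y - ψ x) = d0⁻¹ * (g y - g x) := by
      intro y
      have hgy : g y = ⟪ψ y, w⟫ + f y * d0 := inner_snocE (ψ y) (f y) D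
      have hgx : g x = ⟪ψ x, w⟫ + f x * d0 := inner_snocE (ψ x) (f x) D
      have hvw : ⟪ψ y - ψ x, w⟫ = ⟪ψ y, w⟫ - ⟪ψ x, w⟫ := inner_sub_left _ _ _
      rw [hL0, hvw, hgy, hgx]
      field_simp
      ring
    have htendL0 : Filter.Tendsto (fun y => |f y - f x - L0 (ψ y - ψ x)| / dist y x)
        (𝓝[≠] x) (𝓝 0) := by
      have heq : (fun y => |f y - f x - L0 (ψ y - ψ x)| / dist y x)
          = fun y => |d0⁻¹| * (|g y - g x| / dist y x) := by
        funext y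
        rw [key y, abs_mul, mul_div_assoc]
      rw [heq]
      simpa using htend.const_mul |d0⁻¹|
    refine ⟨L0, htendL0, ?_⟩
    intro L' hL'
    by_contra hne
    set w' : E n := (WithLp.equiv 2 _).symm
      (fun i => (L' - L0) (EuclideanSpace.single i (1:ℝ))) with hw'def
    have hw'app : ∀ i, w' i = (L' - L0) (EuclideanSpace.single i (1:ℝ)) := by
      intro i
      simp [hw'def, WithLp.equiv_symm_apply]
    have hw'v : ∀ v : E n, ⟪v, w'⟫ = L' v - L0 v := by
      intro v
      rw [real_inner_euclid]
      have h1 := linmap_eq_sum (L' - L0) v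
      simp only [LinearMap.sub_apply] at h1
      calc ∑ i, v i * w' i = ∑ i, v i * (L' (EuclideanSpace.single i 1)
            - L0 (EuclideanSpace.single i 1)) := by
            refine Finset.sum_congr rfl fun i _ => ?_
            rw [hw'app i, LinearMap.sub_apply]
      _ = L' v - L0 v := h1.symm
    have hw0 : w' ≠ 0 := by
      intro h0
      apply hne
      apply LinearMap.ext
      intro v
      have := hw'v v
      rw [h0, inner_zero_right] at this
      linarith [this]
    have hnw' : (0:ℝ) < ‖w'‖ := norm_pos_iff.2 hw0
    set Dw : E n := ‖w'‖⁻¹ • w' with hDwdef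
    have hDw1 : ‖Dw‖ = 1 := by
      rw [hDwdef, norm_smul, norm_inv, norm_norm, inv_mul_cancel₀ hnw'.ne']
    have hpos := hxψ Dw hDw1
    have hdiff : Filter.Tendsto (fun y => |(L' - L0) (ψ y - ψ x)| / dist y x)
        (𝓝[≠] x) (𝓝 0) := by
      have hsum : Filter.Tendsto (fun y => |f y - f x - L0 (ψ y - ψ x)| / dist y x
          + |f y - f x - L' (ψ y - ψ x)| / dist y x) (𝓝[≠] x) (𝓝 0) := by
        simpa using htendL0.add hL'
      apply squeeze_zero (fun y => by positivity) _ hsum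
      intro y
      have h1 : (L' - L0) (ψ y - ψ x)
          = (f y - f x - L0 (ψ y - ψ x)) - (f y - f x - L' (ψ y - ψ x)) := by
        rw [LinearMap.sub_apply]; ring
      rw [h1, ← add_div]
      refine div_le_div_of_nonneg_right ?_ dist_nonneg |>.trans_eq rfl
      exact (abs_sub _ _).trans (le_refl _)
    have hg'tend : Filter.Tendsto
        (fun y => |(fun z => ⟪ψ z, Dw⟫) y - (fun z => ⟪ψ z, Dw⟫) x| / dist y x)
        (𝓝[≠] x) (𝓝 0) := by
      have heq : (fun y => |⟪ψ y, Dw⟫ - ⟪ψ x, Dw⟫| / dist y x)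
          = fun y => ‖w'‖⁻¹ * (|(L' - L0) (ψ y - ψ x)| / dist y x) := by
        funext y
        have h1 : ⟪ψ y, Dw⟫ - ⟪ψ x, Dw⟫ = ⟪ψ y - ψ x, Dw⟫ := (inner_sub_left _ _ _).symm
        have h2 : ⟪ψ y - ψ x, Dw⟫ = ‖w'‖⁻¹ * ⟪ψ y - ψ x, w'⟫ := real_inner_smul_right _ _ _
        rw [h1, h2, hw'v, abs_mul, abs_of_nonneg (by positivity : (0:ℝ) ≤ ‖w'‖⁻¹),
          mul_div_assoc, LinearMap.sub_apply]
      simp only []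
      rw [heq]
      simpa using hdiff.const_mul (‖w'‖⁻¹)
    have hg'b : ∀ y z, |⟪ψ y, Dw⟫ - ⟪ψ z, Dw⟫| ≤ ((Kψ : ℝ) * ‖Dw‖) * dist y z :=
      inner_comp_bound hψd Dw
    have : lipAt (fun z => ⟪ψ z, Dw⟫) x ≤ 0 :=
      lipAt_nonpos_of_tendsto (by positivity) hg'b hg'tend
    exact absurd this (not_le.2 hpos)

end DiffCore

section MeasAux

variable {Z : Type*} [MetricSpace Z] [MeasurableSpace Z] [BorelSpace Z]
  [TopologicalSpace.SeparableSpace Z] [Nonempty Z]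

variable {g : Z → ℝ} {c : ℝ}

lemma measurableSet_lt_Wq (hc : 0 ≤ c) (hg : ∀ y z, |g y - g z| ≤ c * dist y z)
    {q b : ℝ} (hq : 0 < q) (hb : 0 ≤ b) :
    MeasurableSet {x : Z | b < Wq g x q} := by
  have hcont : Continuous g := by
    have : LipschitzWith ⟨c, hc⟩ g :=
      LipschitzWith.of_dist_le_mul fun y z => by rw [Real.dist_eq]; exact hg y z
    exact this.continuous
  have hset : {x : Z | b < Wq g x q} = ⋃ i : ℕ,
      {x : Z | dist (TopologicalSpace.denseSeq Z i) x < q ∧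
        0 < dist (TopologicalSpace.denseSeq Z i) x ∧
        b * dist (TopologicalSpace.denseSeq Z i) x < |g (TopologicalSpace.denseSeq Z i) - g x|} := by
    ext x
    simp only [Set.mem_setOf_eq, Set.mem_iUnion]
    constructor
    · intro hWx
      have hex : ∃ v ∈ rset g x q, b < v := by
        by_contra hcon
        push_neg at hcon
        exact absurd (Real.sSup_le hcon hb) (not_le.2 hWx)
      obtain ⟨v, ⟨y, ⟨hy1, hy2⟩, rfl⟩, hbv⟩ := hex
      have hd : 0 < dist y x := dist_pos.2 (by simpa using hy2)
      set O : Set Z := {y' : Z | dist y' x < q ∧ 0 < dist y' x ∧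
        b * dist y' x < |g y' - g x|} with hO
      have hyO : y ∈ O := by
        refine ⟨Metric.mem_ball.1 hy1, hd, ?_⟩
        rwa [lt_div_iff₀ hd] at hbv
      have hd1 : Continuous fun y' : Z => dist y' x := continuous_id.dist continuous_const
      have hd2 : Continuous fun y' : Z => |g y' - g x| := (hcont.sub continuous_const).abs
      have hOopen : IsOpen O := by
        rw [hO, show {y' : Z | dist y' x < q ∧ 0 < dist y' x ∧ b * dist y' x < |g y' - g x|}
          = {y' | dist y' x < q} ∩ ({y' | 0 < dist y' x} ∩
            {y' | b * dist y' x < |g y' - g x|}) from rfl]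
        exact (isOpen_lt hd1 continuous_const).inter ((isOpen_lt continuous_const hd1).inter
          (isOpen_lt (continuous_const.mul hd1) hd2))
      obtain ⟨i, hi⟩ := (TopologicalSpace.denseRange_denseSeq Z).exists_mem_open hOopen ⟨y, hyO⟩
      exact ⟨i, hi.1, hi.2.1, hi.2.2⟩
    · rintro ⟨i, h1, h2, h3⟩
      set y := TopologicalSpace.denseSeq Z i
      have hd : 0 < dist y x := h2
      have hne : y ≠ x := by
        intro h; rw [h] at hd; simp at hd
      have hv : |g y - g x| / dist y x ∈ rset g x q :=
        ⟨y, ⟨Metric.mem_ball.2 h1, hne⟩, rfl⟩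
      have : b < |g y - g x| / dist y x := (lt_div_iff₀ hd).2 h3
      exact lt_of_lt_of_le this (le_csSup (bddAbove_rset hg) hv)
  rw [hset]
  refine MeasurableSet.iUnion fun i => ?_
  set ci := TopologicalSpace.denseSeq Z i
  have hd1 : Continuous fun x : Z => dist ci x := continuous_const.dist continuous_id
  have hd2 : Continuous fun x : Z => |g ci - g x| := (continuous_const.sub hcont).abs
  rw [show {x : Z | dist ci x < q ∧ 0 < dist ci x ∧ b * dist ci x < |g ci - g x|}
    = {x | dist ci x < q} ∩ ({x | 0 < dist ci x} ∩ {x | b * dist ci x < |g ci - g x|}) from rfl]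
  exact ((isOpen_lt hd1 continuous_const).inter ((isOpen_lt continuous_const hd1).inter
    (isOpen_lt (continuous_const.mul hd1) hd2))).measurableSet

lemma measurableSet_le_lipAt (hc : 0 ≤ c) (hg : ∀ y z, |g y - g z| ≤ c * dist y z)
    {ε : ℝ} (hε : 0 < ε) :
    MeasurableSet {x : Z | ε ≤ lipAt g x} := by
  have hset : {x : Z | ε ≤ lipAt g x}
      = ⋂ q : {q : ℚ // 0 < q}, {x : Z | ε ≤ Wq g x (q : ℝ)} := by
    ext x
    simp only [Set.mem_setOf_eq, Set.mem_iInter, lipAt_eq hc hg]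
    exact le_ciInf_iff (bddBelow_Wq_range hg)
  rw [hset]
  refine MeasurableSet.iInter fun q => ?_
  have hq : (0:ℝ) < ((q : ℚ) : ℝ) := by exact_mod_cast q.2
  have hset2 : {x : Z | ε ≤ Wq g x ((q:ℚ):ℝ)}
      = ⋂ b : {b : ℚ // 0 ≤ (b:ℝ) ∧ (b:ℝ) < ε}, {x : Z | ((b:ℚ):ℝ) < Wq g x ((q:ℚ):ℝ)} := by
    ext x
    simp only [Set.mem_setOf_eq, Set.mem_iInter]
    constructor
    · rintro h ⟨b, hb1, hb2⟩
      exact lt_of_lt_of_le hb2 h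
    · intro h
      by_contra hcon
      push_neg at hcon
      obtain ⟨b, hb1, hb2⟩ := exists_rat_btwn hcon
      have hb0 : 0 ≤ (b:ℝ) := le_trans (Wq_nonneg hg) hb1.le
      exact absurd (h ⟨b, hb0, hb2⟩) (not_lt.2 hb1.le)
  rw [hset2]
  exact MeasurableSet.iInter fun b => measurableSet_lt_Wq hc hg hq b.2.1

end MeasAux

section IndSetMeas

variable {Z : Type*} [MetricSpace Z] [MeasurableSpace Z] [BorelSpace Z]
  [TopologicalSpace.SeparableSpace Z] [Nonempty Z]

variable {n : ℕ} {ψ : Z → E n} {c : ℝ}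

lemma lipAt_inner_le (hc : 0 ≤ c) (hψd : ∀ y z, dist (ψ y) (ψ z) ≤ c * dist y z)
    (x : Z) (D D' : E n) :
    lipAt (fun y => ⟪ψ y, D⟫) x ≤ lipAt (fun y => ⟪ψ y, D'⟫) x + c * ‖D - D'‖ := by
  refine lipAt_le_of_close (by positivity) (by positivity)
    (inner_comp_bound hψd D) (inner_comp_bound hψd D') (by positivity) ?_
  intro y z
  have h1 := inner_comp_bound hψd (D - D') y z
  have h2 : ⟪ψ y, D - D'⟫ - ⟪ψ z, D - D'⟫
      = (⟪ψ y, D⟫ - ⟪ψ z, D⟫) - (⟪ψ y, D'⟫ - ⟪ψ z, D'⟫) := by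
    rw [inner_sub_right, inner_sub_right]; ring
  rw [h2] at h1
  exact h1

lemma measurableSet_indSet (ψ : Z → E n) (hψ : ∃ K, LipschitzWith K ψ) :
    MeasurableSet (indSet ψ) := by
  obtain ⟨K, hK⟩ := hψ
  have hψd : ∀ y z, dist (ψ y) (ψ z) ≤ (K:ℝ) * dist y z := fun y z => hK.dist_le_mul y z
  have hc : (0:ℝ) ≤ (K:ℝ) := K.coe_nonneg
  rcases Nat.eq_zero_or_pos n with hn | hn
  · subst hn
    have huniv : indSet ψ = Set.univ := by
      ext x
      simp only [indSet, Set.mem_setOf_eq, Set.mem_univ, iff_true]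
      intro D hD
      exfalso
      have hD0 : D = 0 := PiLp.ext fun i => Fin.elim0 i
      rw [hD0, norm_zero] at hD
      norm_num at hD
    rw [huniv]; exact MeasurableSet.univ
  · obtain ⟨n', rfl⟩ : ∃ m, n = m + 1 := ⟨n - 1, (Nat.succ_pred_eq_of_pos hn).symm⟩
    haveI hsph : Nonempty (sphere (0 : E (n'+1)) 1) := ⟨⟨EuclideanSpace.single 0 (1:ℝ), by
      rw [mem_sphere_zero_iff_norm, EuclideanSpace.norm_single]; norm_num⟩⟩
    set Dk : ℕ → E (n'+1) :=
      fun k => (TopologicalSpace.denseSeq (sphere (0 : E (n'+1)) 1) k : E (n'+1)) with hDk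
    have hDknorm : ∀ k, ‖Dk k‖ = 1 :=
      fun k => mem_sphere_zero_iff_norm.1 (TopologicalSpace.denseSeq (sphere (0 : E (n'+1)) 1) k).2
    have hset : indSet ψ = ⋃ m : ℕ, ⋂ k : ℕ,
        {x : Z | 1/((m:ℝ)+1) ≤ lipAt (fun y => ⟪ψ y, Dk k⟫) x} := by
      ext x
      simp only [indSet, Set.mem_setOf_eq, Set.mem_iUnion, Set.mem_iInter]
      constructor
      · intro hx
        set F : E (n'+1) → ℝ := fun D => lipAt (fun y => ⟪ψ y, D⟫) x with hF
        have hFlip : ∀ D D', F D ≤ F D' + (K:ℝ) * ‖D - D'‖ :=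
          fun D D' => lipAt_inner_le hc hψd x D D'
        have hFcont : Continuous F := by
          have hL : LipschitzWith K F := by
            apply LipschitzWith.of_dist_le_mul
            intro D D'
            rw [Real.dist_eq, abs_sub_le_iff, dist_eq_norm]
            constructor
            · have := hFlip D D'; linarith
            · have := hFlip D' D; rw [norm_sub_rev (D') D] at this; linarith
          exact hL.continuous
        obtain ⟨D₀, hD₀mem, hD₀min⟩ := (isCompact_sphere (0 : E (n'+1)) 1).exists_isMinOn
          ⟨_, hsph.some.2⟩ hFcont.continuousOn
        have hD₀pos : 0 < F D₀ := hx D₀ (mem_sphere_zero_iff_norm.1 hD₀mem)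
        obtain ⟨m, hm⟩ := exists_nat_one_div_lt hD₀pos
        refine ⟨m, fun k => ?_⟩
        have hmin : F D₀ ≤ F (Dk k) := isMinOn_iff.1 hD₀min _ (TopologicalSpace.denseSeq (sphere (0 : E (n'+1)) 1) k).2
        exact le_trans hm.le hmin
      · rintro ⟨m, hmk⟩ D hD
        have hmain : ∀ δ > (0:ℝ), 1/((m:ℝ)+1) ≤ lipAt (fun y => ⟪ψ y, D⟫) x + δ := by
          intro δ hδ
          obtain ⟨k, hk⟩ := Metric.denseRange_iff.1
            (TopologicalSpace.denseRange_denseSeq (sphere (0 : E (n'+1)) 1))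
            ⟨D, mem_sphere_zero_iff_norm.2 hD⟩ (δ/((K:ℝ)+1)) (by positivity)
          have hdist : ‖Dk k - D‖ < δ/((K:ℝ)+1) := by
            rw [Subtype.dist_eq, dist_eq_norm] at hk
            rw [norm_sub_rev]
            exact hk
          have h1 := hmk k
          have h2 := lipAt_inner_le hc hψd x (Dk k) D
          have h3 : (K:ℝ) * ‖Dk k - D‖ ≤ δ := by
            have he : ((K:ℝ)+1) * (δ/((K:ℝ)+1)) = δ := by field_simp
            calc (K:ℝ) * ‖Dk k - D‖ ≤ (K:ℝ) * (δ/((K:ℝ)+1)) :=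
                  mul_le_mul_of_nonneg_left hdist.le hc
            _ ≤ ((K:ℝ)+1) * (δ/((K:ℝ)+1)) := by
                  apply mul_le_mul_of_nonneg_right (by linarith) (by positivity)
            _ = δ := he
          linarith
        have hfin : 1/((m:ℝ)+1) ≤ lipAt (fun y => ⟪ψ y, D⟫) x :=
          le_of_forall_pos_le_add hmain
        have hp : (0:ℝ) < 1/((m:ℝ)+1) := by positivity
        linarith
    rw [hset]
    refine MeasurableSet.iUnion fun m => MeasurableSet.iInter fun k => ?_
    exact measurableSet_le_lipAt (c := (K:ℝ) * ‖Dk k‖)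
      (by positivity) (inner_comp_bound hψd (Dk k)) (by positivity)

end IndSetMeas

section EssSup

variable {Z : Type*} [MeasurableSpace Z]

lemma exists_countable_cover {ι : Type*} [Nonempty ι] (s : ι → Set Z)
    (hs : ∀ j, MeasurableSet (s j)) (μ : Measure Z) [SigmaFinite μ] :
    ∃ v : ℕ → ι, ∀ j, μ (s j \ ⋃ k, s (v k)) = 0 := by
  obtain ⟨ν, hνfin, hμν, hνμ⟩ := exists_isFiniteMeasure_absolutelyContinuous μ
  set F : (ℕ → ι) → ℝ≥0∞ := fun u => ν (⋃ k, s (u k)) with hF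
  set α : ℝ≥0∞ := ⨆ u : ℕ → ι, F u with hα
  have hαfin : α < ⊤ :=
    lt_of_le_of_lt (iSup_le fun u => measure_mono (Set.subset_univ _)) (measure_lt_top ν _)
  have happrox : ∀ j : ℕ, ∃ u : ℕ → ι, α - ((j:ℝ≥0∞))⁻¹ ≤ F u := by
    intro j
    rcases eq_or_ne α 0 with h0 | h0
    · exact ⟨fun _ => Classical.arbitrary ι, by simp [h0]⟩
    · have hlt : α - ((j:ℝ≥0∞))⁻¹ < α :=
        ENNReal.sub_lt_self hαfin.ne h0 (by simp [ENNReal.inv_ne_zero])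
      rw [hα] at hlt
      obtain ⟨u, hu⟩ := lt_iSup_iff.1 hlt
      exact ⟨u, hu.le⟩
  choose U hU using happrox
  set v : ℕ → ι := fun p => U (Nat.unpair p).1 (Nat.unpair p).2 with hv
  set V : Set Z := ⋃ k, s (v k) with hV
  have hVmeas : MeasurableSet V := MeasurableSet.iUnion fun k => hs (v k)
  have hVle : ν V ≤ α := le_iSup F v
  have hVge : α ≤ ν V := by
    refine ENNReal.le_of_forall_pos_le_add fun ε hε hb => ?_
    obtain ⟨j, hj⟩ := ENNReal.exists_inv_nat_lt (by exact_mod_cast hε.ne' : (ε:ℝ≥0∞) ≠ 0)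
    have hsub : (⋃ k, s (U j k)) ⊆ V := by
      refine Set.iUnion_subset fun k => ?_
      have : s (U j k) = s (v (Nat.pair j k)) := by rw [hv]; simp [Nat.unpair_pair]
      rw [this]
      exact Set.subset_iUnion (fun p => s (v p)) _
    have h1 : α - ((j:ℝ≥0∞))⁻¹ ≤ ν V := le_trans (hU j) (measure_mono hsub)
    have h2 : α ≤ ν V + ((j:ℝ≥0∞))⁻¹ := tsub_le_iff_right.1 h1
    exact h2.trans (add_le_add_right hj.le _)
  refine ⟨v, fun j => ?_⟩
  have hVfin : ν V ≠ ⊤ := (measure_lt_top ν _).ne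
  have hunion : ν (V ∪ s j) = ν V + ν (s j \ V) := by
    rw [← Set.union_diff_self]
    exact measure_union disjoint_sdiff_self_right ((hs j).diff hVmeas)
  have hle : ν (V ∪ s j) ≤ α := by
    set v' : ℕ → ι := fun k => Nat.casesOn k j (fun k' => v k') with hv'
    have : V ∪ s j = ⋃ k, s (v' k) := by
      ext z
      simp only [Set.mem_union, Set.mem_iUnion, hV]
      constructor
      · rintro (⟨k, hk⟩ | hj')
        · exact ⟨k + 1, hk⟩
        · exact ⟨0, hj'⟩
      · rintro ⟨k, hk⟩
        cases k with
        | zero => exact Or.inr hk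
        | succ k' => exact Or.inl ⟨k', hk⟩
    rw [this]
    exact le_iSup F v'
  have hzero : ν (s j \ V) = 0 := by
    by_contra hne
    have : ν V < ν V + ν (s j \ V) := ENNReal.lt_add_right hVfin hne
    rw [← hunion] at this
    exact absurd (this.trans_le (hle.trans hVge)) (lt_irrefl _)
  exact hμν hzero

end EssSup

section Main

variable {X : Type*} [MetricSpace X] [CompleteSpace X] [TopologicalSpace.SeparableSpace X]
  [MeasurableSpace X] [BorelSpace X]

theorem main_ind [Nonempty X] : ∀ (n : ℕ) (μ : Measure X), SigmaFinite μ →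
    (∀ φ : X → E n, (∃ K, LipschitzWith K φ) → μ (indSet φ) = 0) →
    IsLipDiffSpaceWith μ (fun k => k ≤ n - 1) := by
  intro n
  induction n with
  | zero =>
    intro μ hσ h
    have hμ0 : μ = 0 := by
      have h1 := h (fun _ => 0) ⟨0, LipschitzWith.const 0⟩
      have h2 : indSet (fun _ : X => (0 : E 0)) = Set.univ := by
        ext x
        simp only [indSet, Set.mem_setOf_eq, Set.mem_univ, iff_true]
        intro D hD
        exfalso
        have hD0 : D = 0 := PiLp.ext fun i => Fin.elim0 i
        rw [hD0, norm_zero] at hD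
        norm_num at hD
      rw [h2] at h1
      exact Measure.measure_univ_eq_zero.1 h1
    refine ⟨fun _ => 0, fun _ => Set.univ, fun _ _ => 0, fun i => Nat.zero_le _,
      fun i => MeasurableSet.univ, by rw [Set.iUnion_const], fun i => ⟨0, LipschitzWith.const 0⟩, ?_⟩
    intro f hf i
    rw [hμ0, ae_iff]
    simp
  | succ n ih =>
    intro μ hσ h
    haveI := hσ
    haveI hι : Nonempty {p : X → E n // ∃ K, LipschitzWith K p} :=
      ⟨⟨fun _ => 0, 0, LipschitzWith.const 0⟩⟩
    obtain ⟨v, hv⟩ := exists_countable_cover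
      (fun p : {p : X → E n // ∃ K, LipschitzWith K p} => indSet p.1)
      (fun p => measurableSet_indSet p.1 p.2) μ
    set V : Set X := ⋃ k, indSet (v k).1 with hV
    have hVmeas : MeasurableSet V :=
      MeasurableSet.iUnion fun k => measurableSet_indSet _ (v k).2
    have hres : ∀ φ : X → E n, (∃ K, LipschitzWith K φ) → (μ.restrict Vᶜ) (indSet φ) = 0 := by
      intro φ hφ
      rw [Measure.restrict_apply (measurableSet_indSet φ hφ)]
      have h1 := hv ⟨φ, hφ⟩
      simpa [Set.diff_eq] using h1
    obtain ⟨N', U', φ', hP', hU'meas, hU'cov, hφ'lip, hdiff'⟩ :=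
      ih (μ.restrict Vᶜ) inferInstance hres
    set Nf : ℕ ⊕ ℕ → ℕ := Sum.elim (fun _ => n) N' with hNf
    set Uf : ℕ ⊕ ℕ → Set X :=
      Sum.elim (fun a => indSet (v a).1) (fun b => Vᶜ ∩ U' b) with hUf
    let φf : (j : ℕ ⊕ ℕ) → X → E (Nf j) := fun j =>
      match j with
      | .inl a => (v a).1
      | .inr b => φ' b
    set e : ℕ ≃ ℕ ⊕ ℕ := (Denumerable.eqv (ℕ ⊕ ℕ)).symm with he
    have hPall : ∀ j, Nf j ≤ (n+1) - 1 := by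
      rintro (a | b)
      · simp [hNf, Nat.succ_sub_one]
      · simp only [hNf, Sum.elim_inr, Nat.succ_sub_one]
        exact (hP' b).trans (Nat.sub_le n 1)
    have hMall : ∀ j, MeasurableSet (Uf j) := by
      rintro (a | b)
      · exact measurableSet_indSet _ (v a).2
      · exact hVmeas.compl.inter (hU'meas b)
    have hLall : ∀ j, ∃ K, LipschitzWith K (φf j) := by
      rintro (a | b)
      · exact (v a).2
      · exact hφ'lip b
    have hall : ∀ (f : X → ℝ), (∃ K, LipschitzWith K f) →
        ∀ j : ℕ ⊕ ℕ, ∀ᵐ x ∂μ, x ∈ Uf j → DiffWrtAt (φf j) f x := by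
      intro f hf
      rintro (a | b)
      · exact diff_on_indSet μ h (v a).1 (v a).2 f hf
      · have hd := hdiff' f hf b
        rw [ae_restrict_iff' hVmeas.compl] at hd
        filter_upwards [hd] with x hx hmem
        exact hx hmem.1 hmem.2
    refine ⟨fun i => Nf (e i), fun i => Uf (e i), fun i => φf (e i),
      fun i => hPall (e i), fun i => hMall (e i), ?_, fun i => hLall (e i),
      fun f hf i => hall f hf (e i)⟩
    rw [Equiv.surjective e |>.iUnion_comp Uf, Set.iUnion_sum]
    have h2 : (⋃ b, Uf (Sum.inr b)) = Vᶜ := by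
      simp only [hUf, Sum.elim_inr]
      rw [← Set.inter_iUnion, hU'cov, Set.inter_univ]
    have h3 : (⋃ a, Uf (Sum.inl a)) = V := by
      simp only [hUf, Sum.elim_inl, hV]
    rw [h2, h3, Set.union_compl_self]

end Main
variable {X : Type*} [MetricSpace X] [CompleteSpace X] [TopologicalSpace.SeparableSpace X]
  [MeasurableSpace X] [BorelSpace X]

/-- If there is `N` such that `μ(ind φ) = 0` for every Lipschitz
`φ : X → ℝᴺ`, then `(X,d,μ)` is a Lipschitz differentiability space with chart
dimensions at most `N - 1`. -/
theorem lipDiff_of_ind_null (μ : Measure X) [SigmaFinite μ] (N : ℕ)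
    (h : ∀ φ : X → E N, (∃ K, LipschitzWith K φ) → μ (indSet φ) = 0) :
    IsLipDiffSpaceWith μ (fun k => k ≤ N - 1) := by
  rcases isEmpty_or_nonempty X with hX | hX
  · refine ⟨fun _ => 0, fun _ => Set.univ, fun _ _ => 0, fun i => Nat.zero_le _,
      fun i => MeasurableSet.univ, by rw [Set.iUnion_const],
      fun i => ⟨0, LipschitzWith.const 0⟩, ?_⟩
    intro f hf i
    exact Filter.Eventually.of_forall fun x => (IsEmpty.false x).elim
  · exact main_ind N μ inferInstance h

end BKO
end
end

section
/- Let X be a metric space and let C ⊂ X be closed. Then the map Γ(X) → ℝ given by γ ↦ γ_*𝓛¹(C) is upper semi-continuous, where Γ(X) carries the metric d_Γ(γ₁,γ₂) = d_H(gr(γ₁), gr(γ₂)). -/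
open MeasureTheory Metric Set Filter Topology ENNReal NNReal
open scoped RealInnerProductSpace

noncomputable section

namespace BKO

variable {X : Type*} [MetricSpace X]

variable {X : Type*} [MetricSpace X] [MeasurableSpace X] [BorelSpace X]

namespace Fragment

lemma isCompact_graph (γ : Fragment X) : IsCompact γ.graph := γ.1.isCompact

lemma snd_eq_of_mem_graph (γ : Fragment X) {t : ℝ} {x y : X}
    (hx : (t, x) ∈ γ.graph) (hy : (t, y) ∈ γ.graph) : x = y := by
  have h := (γ.2.2 (t, x) hx (t, y) hy).2
  simp only [sub_self, abs_zero, mul_zero] at h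
  exact dist_le_zero.mp h

lemma mem_graph_fn (γ : Fragment X) {t : ℝ} (ht : t ∈ γ.dom) : (t, γ.fn t) ∈ γ.graph := by
  obtain ⟨p, hp, hpt⟩ := ht
  have hex : ∃ x, (t, x) ∈ γ.graph := ⟨p.2, by rw [← hpt]; simpa using hp⟩
  unfold Fragment.fn
  rw [dif_pos hex]
  exact hex.choose_spec

lemma isCompact_dom (γ : Fragment X) : IsCompact γ.dom :=
  γ.isCompact_graph.image continuous_fst

lemma dom_subset (γ : Fragment X) : γ.dom ⊆ Set.Icc (0:ℝ) 1 := by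
  rintro t ⟨p, hp, rfl⟩
  exact γ.2.1 p hp

lemma lipschitzOnWith_fn (γ : Fragment X) : LipschitzOnWith 2 γ.fn γ.dom := by
  apply LipschitzOnWith.of_dist_le_mul
  intro s hs t ht
  have h := (γ.2.2 (s, γ.fn s) (γ.mem_graph_fn hs) (t, γ.fn t) (γ.mem_graph_fn ht)).2
  simpa [Real.dist_eq] using h

variable [MeasurableSpace X] [BorelSpace X]

lemma measure_apply' (γ : Fragment X) {C : Set X} (hC : MeasurableSet C) :
    γ.measure C = volume (Prod.fst '' (γ.graph ∩ {p : ℝ × X | p.2 ∈ C})) := by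
  have hdom : MeasurableSet γ.dom := γ.isCompact_dom.isClosed.measurableSet
  have hfn : AEMeasurable γ.fn (volume.restrict γ.dom) :=
    ContinuousOn.aemeasurable γ.lipschitzOnWith_fn.continuousOn hdom
  rw [Fragment.measure, Measure.map_apply_of_aemeasurable hfn hC,
    Measure.restrict_apply' hdom]
  congr 1
  ext t
  constructor
  · rintro ⟨htC, htdom⟩
    exact ⟨(t, γ.fn t), ⟨γ.mem_graph_fn htdom, htC⟩, rfl⟩
  · rintro ⟨p, ⟨hpg, hpC⟩, rfl⟩
    have hdom' : p.1 ∈ γ.dom := ⟨p, hpg, rfl⟩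
    have heq : γ.fn p.1 = p.2 :=
      γ.snd_eq_of_mem_graph (γ.mem_graph_fn hdom') (by simpa using hpg)
    refine ⟨?_, hdom'⟩
    show γ.fn p.1 ∈ C
    rw [heq]; exact hpC

end Fragment

/-- For a closed `C ⊆ X`, the map `γ ↦ γ_*𝓛¹(C)` is upper
semi-continuous on `Γ(X)` with the Hausdorff metric on graphs. -/
theorem upperSemicontinuous_pushforward (C : Set X) (hC : IsClosed C) :
    UpperSemicontinuous (fun γ : Fragment X => (γ.measure C).toReal) := by
  intro γ₀ y hy
  simp only at hy ⊢
  set A : ℝ → Set ℝ :=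
    fun δ => Prod.fst '' (γ₀.graph ∩ {p : ℝ × X | p.2 ∈ cthickening δ C}) with hA
  have hAc : ∀ δ, IsCompact (A δ) := fun δ =>
    (γ₀.isCompact_graph.inter_right
      (isClosed_cthickening.preimage continuous_snd)).image continuous_fst
  set B : ℕ → Set ℝ := fun n => cthickening (1 / (n + 1)) (A (1 / (n + 1))) with hB
  have hδpos : ∀ n : ℕ, (0:ℝ) < 1 / (n + 1) := fun n => by positivity
  -- finiteness of the measures involved
  have hμ0 : γ₀.measure C ≠ ⊤ := by
    rw [γ₀.measure_apply' hC.measurableSet]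
    have hsub : Prod.fst '' (γ₀.graph ∩ {p : ℝ × X | p.2 ∈ C}) ⊆ Set.Icc (0:ℝ) 1 := by
      rintro t ⟨p, ⟨hp, _⟩, rfl⟩; exact γ₀.2.1 p hp
    exact ne_top_of_le_ne_top (by simp [Real.volume_Icc]) (measure_mono hsub)
  have hy' : γ₀.measure C < ENNReal.ofReal y :=
    (ENNReal.lt_ofReal_iff_toReal_lt hμ0).mpr hy
  have hBmeas : ∀ n, NullMeasurableSet (B n) volume := fun n =>
    isClosed_cthickening.measurableSet.nullMeasurableSet
  have hBanti : Antitone B := by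
    intro n m hnm
    have hδ : (1:ℝ) / (m + 1) ≤ 1 / (n + 1) := by
      apply one_div_le_one_div_of_le (by positivity)
      have : (n:ℝ) ≤ m := Nat.cast_le.mpr hnm
      linarith
    calc cthickening (1 / (m + 1)) (A (1 / (m + 1)))
        ⊆ cthickening (1 / (m + 1)) (A (1 / (n + 1))) := by
          apply cthickening_subset_of_subset
          apply Set.image_mono
          apply Set.inter_subset_inter_right
          intro p hp
          exact cthickening_mono hδ C hp
      _ ⊆ cthickening (1 / (n + 1)) (A (1 / (n + 1))) := cthickening_mono hδ _
  have hBfin : volume (B 0) ≠ ⊤ := by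
    have hbd : Bornology.IsBounded (B 0) := (hAc _).isBounded.cthickening
    exact hbd.measure_lt_top.ne
  -- the intersection of the B n is contained in the "γ₀ hits C" set
  have hInter : (⋂ n, B n) ⊆ Prod.fst '' (γ₀.graph ∩ {p : ℝ × X | p.2 ∈ C}) := by
    intro t ht
    have key : ∀ n : ℕ, ∃ p : ℝ × X, p ∈ γ₀.graph ∧
        p.2 ∈ cthickening (1 / (n + 1)) C ∧ dist t p.1 ≤ 1 / (n + 1) := by
      intro n
      have ht' := Set.mem_iInter.mp ht n
      simp only [hB] at ht'
      rw [(hAc (1 / (n + 1))).cthickening_eq_biUnion_closedBall (hδpos n).le] at ht'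
      simp only [Set.mem_iUnion] at ht'
      obtain ⟨s, hs, hts⟩ := ht'
      obtain ⟨p, ⟨hp, hp2⟩, rfl⟩ := hs
      exact ⟨p, hp, hp2, Metric.mem_closedBall.mp hts⟩
    choose p hp1 hp2 hp3 using key
    obtain ⟨a, ha, φ, hφ, hφt⟩ := γ₀.isCompact_graph.tendsto_subseq hp1
    have hδ0 : Tendsto (fun n : ℕ => 1 / ((n:ℝ) + 1)) atTop (𝓝 0) :=
      tendsto_one_div_add_atTop_nhds_zero_nat
    have hδφ : Tendsto (fun n : ℕ => 1 / ((φ n : ℝ) + 1)) atTop (𝓝 0) :=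
      hδ0.comp hφ.tendsto_atTop
    have h1 : Tendsto (fun n => (p (φ n)).1) atTop (𝓝 a.1) :=
      (continuous_fst.tendsto a).comp hφt
    have h2 : Tendsto (fun n => (p (φ n)).2) atTop (𝓝 a.2) :=
      (continuous_snd.tendsto a).comp hφt
    have ha1 : a.1 = t := by
      have hd : Tendsto (fun n => dist t (p (φ n)).1) atTop (𝓝 (dist t a.1)) :=
        tendsto_const_nhds.dist h1
      have hle : dist t a.1 ≤ 0 :=
        le_of_tendsto_of_tendsto' hd hδφ fun n => hp3 (φ n)
      have h0 : dist t a.1 = 0 := le_antisymm hle dist_nonneg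
      exact (dist_eq_zero.mp h0).symm
    have ha2 : a.2 ∈ C := by
      have hq : Tendsto (fun n => EMetric.infEdist (p (φ n)).2 C) atTop
          (𝓝 (EMetric.infEdist a.2 C)) := (EMetric.continuous_infEdist.tendsto _).comp h2
      have hbd : Tendsto (fun n : ℕ => ENNReal.ofReal (1 / ((φ n : ℝ) + 1))) atTop (𝓝 0) := by
        have := (ENNReal.continuous_ofReal.tendsto 0).comp hδφ
        simpa [Function.comp_def] using this
      have hle : EMetric.infEdist a.2 C ≤ 0 :=
        le_of_tendsto_of_tendsto' hq hbd fun n => Metric.mem_cthickening_iff.mp (hp2 (φ n))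
      have hcl : a.2 ∈ closure C :=
        EMetric.mem_closure_iff_infEdist_zero.mpr (le_antisymm hle zero_le)
      rwa [hC.closure_eq] at hcl
    exact ⟨a, ⟨ha, ha2⟩, ha1⟩
  -- continuity from above gives a good n₀
  have htend : Tendsto (fun n => volume (B n)) atTop (𝓝 (volume (⋂ n, B n))) :=
    tendsto_measure_iInter_atTop hBmeas hBanti ⟨0, hBfin⟩
  have hlt : volume (⋂ n, B n) < ENNReal.ofReal y := by
    refine lt_of_le_of_lt (le_trans (measure_mono hInter) ?_) hy'
    rw [γ₀.measure_apply' hC.measurableSet]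
  obtain ⟨n₀, hn₀⟩ := (htend.eventually_lt_const hlt).exists
  -- conclude
  rw [Metric.eventually_nhds_iff]
  refine ⟨1 / ((n₀:ℝ) + 1), hδpos n₀, fun γ hγ => ?_⟩
  have hne : EMetric.hausdorffEdist γ.graph γ₀.graph ≠ ⊤ :=
    Metric.hausdorffEdist_ne_top_of_nonempty_of_bounded γ.1.nonempty γ₀.1.nonempty
      γ.isCompact_graph.isBounded γ₀.isCompact_graph.isBounded
  rw [show dist γ γ₀ = dist γ.1 γ₀.1 from rfl, Metric.NonemptyCompacts.dist_eq] at hγ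
  have hγd : Metric.hausdorffDist γ.graph γ₀.graph < 1 / ((n₀:ℝ) + 1) := hγ
  have hsub : Prod.fst '' (γ.graph ∩ {p : ℝ × X | p.2 ∈ C}) ⊆ B n₀ := by
    rintro t ⟨q, ⟨hq, hqC⟩, rfl⟩
    obtain ⟨r, hr, hqr⟩ := Metric.exists_dist_lt_of_hausdorffDist_lt hq hγd hne
    rw [Prod.dist_eq] at hqr
    have hr2 : r.2 ∈ cthickening (1 / ((n₀:ℝ) + 1)) C := by
      rw [Metric.mem_cthickening_iff]
      refine le_trans (EMetric.infEdist_le_edist_of_mem hqC) ?_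
      rw [edist_dist]
      refine ENNReal.ofReal_le_ofReal ?_
      rw [dist_comm]
      exact (lt_of_le_of_lt (le_max_right _ _) hqr).le
    have hr1 : r.1 ∈ A (1 / ((n₀:ℝ) + 1)) := ⟨r, ⟨hr, hr2⟩, rfl⟩
    show q.1 ∈ B n₀
    simp only [hB]
    rw [Metric.mem_cthickening_iff]
    refine le_trans (EMetric.infEdist_le_edist_of_mem hr1) ?_
    rw [edist_dist]
    exact ENNReal.ofReal_le_ofReal (lt_of_le_of_lt (le_max_left _ _) hqr).le
  have hfin : γ.measure C < ENNReal.ofReal y := by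
    rw [γ.measure_apply' hC.measurableSet]
    exact lt_of_le_of_lt (measure_mono hsub) hn₀
  exact ENNReal.toReal_lt_of_lt_ofReal hfin

end BKO
end
end

section
/- Let X be a metric space and ℙ a finite Borel measure on Γ(X). Then for every Borel set B ⊂ X the map γ ↦ γ_*𝓛¹(B) is a Borel function on Γ(X), and the set function ν(ℙ) defined by ν(ℙ)(B) = ∫_{Γ(X)} γ_*𝓛¹(B) dℙ(γ) for Borel B ⊂ X is a Borel measure on X. -/
open MeasureTheory Metric Set Filter Topology ENNReal NNReal
open scoped RealInnerProductSpace

noncomputable section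

namespace BKO

variable {X : Type*} [MetricSpace X]

variable {X : Type*} [MetricSpace X] [MeasurableSpace X] [BorelSpace X]

section Aux

lemma frag_eq_of_mem_graph {γ : Fragment X} {t : ℝ} {x y : X}
    (hx : (t, x) ∈ γ.graph) (hy : (t, y) ∈ γ.graph) : x = y := by
  have h := (γ.2.2 (t, x) hx (t, y) hy).2
  simp only [sub_self, abs_zero, mul_zero] at h
  exact dist_le_zero.mp h

lemma frag_mem_graph_fn {γ : Fragment X} {t : ℝ} (h : t ∈ γ.dom) :
    (t, γ.fn t) ∈ γ.graph := by
  obtain ⟨p, hp, hpt⟩ := h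
  have hex : ∃ x, (t, x) ∈ γ.graph := ⟨p.2, by rw [← hpt]; exact hp⟩
  unfold Fragment.fn
  rw [dif_pos hex]
  exact hex.choose_spec

lemma frag_isCompact_graph (γ : Fragment X) : IsCompact γ.graph := γ.1.isCompact

lemma frag_isCompact_dom (γ : Fragment X) : IsCompact γ.dom :=
  (frag_isCompact_graph γ).image continuous_fst

lemma frag_measurableSet_dom (γ : Fragment X) : MeasurableSet γ.dom :=
  (frag_isCompact_dom γ).isClosed.measurableSet

lemma frag_continuousOn_fn (γ : Fragment X) : ContinuousOn γ.fn γ.dom := by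
  refine (LipschitzOnWith.of_dist_le_mul (K := 2) fun s hs t ht => ?_).continuousOn
  have h := (γ.2.2 (s, γ.fn s) (frag_mem_graph_fn hs) (t, γ.fn t) (frag_mem_graph_fn ht)).2
  simpa [Real.dist_eq] using h

lemma frag_aemeasurable_fn (γ : Fragment X) :
    AEMeasurable γ.fn (volume.restrict γ.dom) :=
  (frag_continuousOn_fn γ).aemeasurable (frag_measurableSet_dom γ)

lemma frag_preimage_eq (γ : Fragment X) (B : Set X) :
    γ.fn ⁻¹' B ∩ γ.dom = Prod.fst '' (γ.graph ∩ Set.univ ×ˢ B) := by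
  ext t
  constructor
  · rintro ⟨hB, hdom⟩
    exact ⟨(t, γ.fn t), ⟨frag_mem_graph_fn hdom, ⟨trivial, hB⟩⟩, rfl⟩
  · rintro ⟨⟨s, x⟩, ⟨hg, -, hx⟩, rfl⟩
    have hd : s ∈ γ.dom := ⟨(s, x), hg, rfl⟩
    have hfx : γ.fn s = x := frag_eq_of_mem_graph (frag_mem_graph_fn hd) hg
    exact ⟨by rw [Set.mem_preimage, hfx]; exact hx, hd⟩

lemma frag_measure_eq (γ : Fragment X) {B : Set X} (hB : MeasurableSet B) :
    γ.measure B = volume (Prod.fst '' (γ.graph ∩ Set.univ ×ˢ B)) := by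
  rw [Fragment.measure, Measure.map_apply_of_aemeasurable (frag_aemeasurable_fn γ) hB,
      Measure.restrict_apply' (frag_measurableSet_dom γ), frag_preimage_eq]

lemma frag_measure_le_one (γ : Fragment X) (B : Set X) : γ.measure B ≤ 1 := by
  calc γ.measure B ≤ γ.measure Set.univ := measure_mono (Set.subset_univ B)
    _ = volume (Prod.fst '' (γ.graph ∩ Set.univ ×ˢ Set.univ)) := frag_measure_eq γ .univ
    _ ≤ volume (Set.Icc (0:ℝ) 1) := by
        refine measure_mono ?_
        rintro t ⟨p, ⟨hp, -⟩, rfl⟩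
        exact γ.2.1 p hp
    _ = 1 := by simp

lemma frag_measurable_closed {B : Set X} (hB : IsClosed B) :
    Measurable (fun γ : Fragment X => volume (Prod.fst '' (γ.graph ∩ Set.univ ×ˢ B))) := by
  apply measurable_of_Iio
  intro c
  refine (Metric.isOpen_iff.mpr ?_).measurableSet
  intro γ hγ
  rw [Set.mem_preimage, Set.mem_Iio] at hγ
  set T : ℕ → Set ℝ := fun n =>
    Metric.thickening (1 / (n + 1))
      (Prod.fst '' (γ.graph ∩ Set.univ ×ˢ Metric.cthickening (1 / (n + 1)) B)) with hT
  have hεpos : ∀ n : ℕ, (0:ℝ) < 1 / (n + 1) := by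
    intro n; positivity
  have hεle : ∀ m n : ℕ, m ≤ n → (1:ℝ) / (n + 1) ≤ 1 / (m + 1) := by
    intro m n hmn
    apply one_div_le_one_div_of_le (by positivity)
    have : (m:ℝ) ≤ n := Nat.cast_le.mpr hmn
    linarith
  -- the intersection of the `T n` is contained in the projection of the graph over `B`
  have hBinter : (⋂ n, T n) ⊆ Prod.fst '' (γ.graph ∩ Set.univ ×ˢ B) := by
    intro t ht
    simp only [Set.mem_iInter] at ht
    have hch : ∀ n : ℕ, ∃ p : ℝ × X, p ∈ γ.graph ∧
        p.2 ∈ Metric.cthickening (1 / (n + 1)) B ∧ dist t p.1 < 1 / (n + 1) := by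
      intro n
      obtain ⟨s, hs, hts⟩ := Metric.mem_thickening_iff.mp (ht n)
      obtain ⟨p, ⟨hpK, -, hp2⟩, rfl⟩ := hs
      exact ⟨p, hpK, hp2, hts⟩
    choose p hpK hp2 hpd using hch
    obtain ⟨q, hqK, φ, hφ, hconv⟩ := (frag_isCompact_graph γ).tendsto_subseq hpK
    have hεto : Tendsto (fun n : ℕ => 1 / ((n:ℝ) + 1)) atTop (𝓝 0) :=
      tendsto_one_div_add_atTop_nhds_zero_nat
    have h1 : Tendsto (fun n => (p (φ n)).1) atTop (𝓝 q.1) :=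
      (continuous_fst.tendsto q).comp hconv
    have h2 : Tendsto (fun n => (p (φ n)).1) atTop (𝓝 t) := by
      rw [tendsto_iff_dist_tendsto_zero]
      refine squeeze_zero (fun n => dist_nonneg) (fun n => ?_) hεto
      calc dist (p (φ n)).1 t = dist t (p (φ n)).1 := dist_comm _ _
        _ ≤ 1 / (φ n + 1) := (hpd (φ n)).le
        _ ≤ 1 / (n + 1) := hεle n (φ n) (hφ.le_apply)
    have hq1 : q.1 = t := tendsto_nhds_unique h1 h2
    have hq2 : q.2 ∈ B := by
      rw [← hB.closure_eq, Metric.closure_eq_iInter_cthickening]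
      refine Set.mem_iInter₂.mpr fun δ hδ => ?_
      obtain ⟨m, hm⟩ := exists_nat_one_div_lt hδ
      refine Metric.cthickening_mono hm.le B ?_
      refine Metric.isClosed_cthickening.mem_of_tendsto
        ((continuous_snd.tendsto q).comp hconv) ?_
      filter_upwards [eventually_ge_atTop m] with n hn
      exact Metric.cthickening_mono (hεle m (φ n) (hn.trans hφ.le_apply)) B (hp2 (φ n))
    exact ⟨q, ⟨hqK, Set.mem_univ _, hq2⟩, hq1⟩
  have hmeasT : ∀ n, MeasurableSet (T n) := fun n => Metric.isOpen_thickening.measurableSet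
  have hanti : Antitone T := by
    intro m n hmn
    refine (Metric.thickening_mono (hεle m n hmn) _).trans
      (Metric.thickening_subset_of_subset _ ?_)
    exact Set.image_mono (Set.inter_subset_inter_right _
      (Set.prod_mono subset_rfl (Metric.cthickening_mono (hεle m n hmn) B)))
  have hfin : volume (T 0) ≠ ∞ := by
    have hsub : T 0 ⊆ Set.Ioo (-1 : ℝ) 2 := by
      intro t ht
      obtain ⟨s, hs, hts⟩ := Metric.mem_thickening_iff.mp ht
      obtain ⟨p, ⟨hpK, -⟩, rfl⟩ := hs
      have hp1 := γ.2.1 p hpK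
      have h01 : (1:ℝ) / ((0:ℕ) + 1) = 1 := by norm_num
      rw [h01, Real.dist_eq] at hts
      have := abs_lt.mp hts
      constructor <;> [linarith [hp1.1]; linarith [hp1.2]]
    refine (lt_of_le_of_lt (measure_mono hsub) ?_).ne
    rw [Real.volume_Ioo]
    exact ofReal_lt_top
  have hiInf : volume (⋂ n, T n) = ⨅ n, volume (T n) :=
    hanti.measure_iInter (fun n => (hmeasT n).nullMeasurableSet) ⟨0, hfin⟩
  have hlt : ⨅ n, volume (T n) < c := by
    rw [← hiInf]
    exact lt_of_le_of_lt (measure_mono hBinter) hγ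
  obtain ⟨n, hn⟩ := iInf_lt_iff.mp hlt
  refine ⟨1 / (n + 1), hεpos n, fun γ' hγ' => ?_⟩
  rw [Set.mem_preimage, Set.mem_Iio]
  refine lt_of_le_of_lt (le_trans (measure_mono ?_) (measure_mono subset_rfl)) hn
  have hdH : Metric.hausdorffDist γ'.graph γ.graph < 1 / (n + 1) := by
    rw [Metric.mem_ball] at hγ'
    change dist γ'.1 γ.1 < _ at hγ'
    rw [Metric.NonemptyCompacts.dist_eq] at hγ'
    exact hγ'
  have hne : EMetric.hausdorffEdist γ'.graph γ.graph ≠ ⊤ :=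
    Metric.hausdorffEdist_ne_top_of_nonempty_of_bounded γ'.1.nonempty γ.1.nonempty
      γ'.1.isCompact.isBounded γ.1.isCompact.isBounded
  rintro t ⟨⟨s, x⟩, ⟨hg, -, hx⟩, rfl⟩
  obtain ⟨q, hqK, hq⟩ := Metric.exists_dist_lt_of_hausdorffDist_lt hg hdH hne
  rw [Prod.dist_eq, max_lt_iff] at hq
  refine Metric.mem_thickening_iff.mpr ⟨q.1, ⟨q, ⟨hqK, Set.mem_univ _, ?_⟩, rfl⟩, hq.1⟩
  exact Metric.thickening_subset_cthickening _ _
    (Metric.mem_thickening_iff.mpr ⟨x, hx, by rw [dist_comm]; exact hq.2⟩)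

end Aux

/-- For a finite Borel measure `ℙ` on `Γ(X)`, the map `γ ↦ γ_*𝓛¹(B)` is
Borel for every Borel `B ⊆ X`, and `B ↦ ∫ γ_*𝓛¹(B) dℙ(γ)` defines a Borel measure. -/
theorem measurable_pushforward_and_nu_exists (ℙ : Measure (Fragment X))
    [IsFiniteMeasure ℙ] :
    (∀ B : Set X, MeasurableSet B → Measurable (fun γ : Fragment X => γ.measure B)) ∧
    ∃ ν : Measure X, ∀ B : Set X, MeasurableSet B → ν B = ∫⁻ γ, γ.measure B ∂ℙ := by
  have key : ∀ ⦃B : Set X⦄, MeasurableSet B →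
      Measurable (fun γ : Fragment X => γ.measure B) := by
    refine MeasurableSpace.induction_on_inter
      (BorelSpace.measurable_eq.trans borel_eq_generateFrom_isClosed)
      isPiSystem_isClosed ?_ ?_ ?_ ?_
    · simpa using measurable_const (a := (0 : ℝ≥0∞))
    · intro t ht
      have heq : (fun γ : Fragment X => γ.measure t) =
          fun γ => volume (Prod.fst '' (γ.graph ∩ Set.univ ×ˢ t)) :=
        funext fun γ => frag_measure_eq γ ht.measurableSet
      rw [heq]
      exact frag_measurable_closed ht
    · intro t htm hm
      have huniv : Measurable fun γ : Fragment X => γ.measure Set.univ := by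
        have heq : (fun γ : Fragment X => γ.measure Set.univ) =
            fun γ => volume (Prod.fst '' (γ.graph ∩ Set.univ ×ˢ Set.univ)) :=
          funext fun γ => frag_measure_eq γ .univ
        rw [heq]
        exact frag_measurable_closed isClosed_univ
      have heq : (fun γ : Fragment X => γ.measure tᶜ) =
          fun γ => γ.measure Set.univ - γ.measure t := by
        funext γ
        exact measure_compl htm (lt_of_le_of_lt (frag_measure_le_one γ t) one_lt_top).ne
      rw [heq]
      exact huniv.sub hm
    · intro f hdisj hfm hm
      have heq : (fun γ : Fragment X => γ.measure (⋃ i, f i)) =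
          fun γ => ∑' i, γ.measure (f i) := funext fun γ => measure_iUnion hdisj hfm
      rw [heq]
      exact Measurable.ennreal_tsum hm
  refine ⟨fun B hB => key hB, ℙ.bind Fragment.measure, fun B hB => ?_⟩
  exact Measure.bind_apply hB
    (Measure.measurable_of_measurable_coe _ fun s hs => key hs).aemeasurable

end BKO
end
end

section
/- Let X be a metric space, φ : X → ℝⁿ Lipschitz, f : X → ℝ Lipschitz, and x₀ ∈ ind φ. If f is not differentiable with respect to φ at x₀, then x₀ ∈ ind(φ,f), where (φ,f) : X → ℝ^{n+1} is the map x ↦ (φ(x), f(x)). -/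
open MeasureTheory Metric Set Filter Topology ENNReal NNReal
open scoped RealInnerProductSpace

noncomputable section

namespace BKO

variable {X : Type*} [MetricSpace X]

variable {X : Type*} [MetricSpace X]


private lemma sSup_quot_nonneg (g : X → ℝ) (x₀ : X) {r : ℝ} (hr : 0 ≤ r) :
    0 ≤ sSup ((fun y => |g y - g x₀| / r) '' Metric.closedBall x₀ r) := by
  by_cases hb : BddAbove ((fun y => |g y - g x₀| / r) '' Metric.closedBall x₀ r)
  · have h0 : (0:ℝ) ∈ (fun y => |g y - g x₀| / r) '' Metric.closedBall x₀ r :=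
      ⟨x₀, Metric.mem_closedBall_self hr, by simp⟩
    exact le_csSup hb h0
  · rw [Real.sSup_of_not_bddAbove hb]

private lemma lipAt_le_zero_of_tendsto (g : X → ℝ) (x₀ : X)
    (h : Tendsto (fun x => |g x - g x₀| / dist x x₀) (𝓝[≠] x₀) (𝓝 0)) :
    lipAt g x₀ ≤ 0 := by
  have key : ∀ ε > (0:ℝ), lipAt g x₀ ≤ ε := by
    intro ε hε
    have hev : ∀ᶠ x in 𝓝[≠] x₀, |g x - g x₀| / dist x x₀ < ε :=
      h.eventually (eventually_lt_nhds hε)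
    rw [(Metric.nhdsWithin_basis_ball).eventually_iff] at hev
    obtain ⟨δ, hδ, hδ'⟩ := hev
    apply Filter.limsup_le_of_le
    · refine Filter.isCoboundedUnder_le_of_eventually_le (𝓝[>] (0:ℝ)) (x := 0) ?_
      filter_upwards [self_mem_nhdsWithin] with r hr
      exact sSup_quot_nonneg g x₀ ((Set.mem_Ioi.1 hr).le)
    · filter_upwards [Ioo_mem_nhdsGT_of_mem (by exact ⟨le_refl 0, hδ⟩ : (0:ℝ) ∈ Ico 0 δ)] with r hr
      apply Real.sSup_le _ hε.le
      rintro _ ⟨y, hy, rfl⟩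
      rcases eq_or_ne y x₀ with rfl | hne
      · simp [hε.le]
      · have hd : 0 < dist y x₀ := dist_pos.2 hne
        have h1 : |g y - g x₀| / dist y x₀ < ε :=
          hδ' ⟨Metric.mem_ball.2 (lt_of_le_of_lt (Metric.mem_closedBall.1 hy) hr.2), hne⟩
        calc |g y - g x₀| / r ≤ |g y - g x₀| / dist y x₀ :=
              div_le_div_of_nonneg_left (abs_nonneg _) hd (Metric.mem_closedBall.1 hy)
          _ ≤ ε := h1.le
  refine le_of_forall_pos_le_add fun ε hε => ?_
  rw [zero_add]; exact key ε hε

private lemma tendsto_of_lipAt_le_zero (g : X → ℝ) (x₀ : X) (K : ℝ)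
    (hK : 0 ≤ K) (hg : ∀ x y, |g x - g y| ≤ K * dist x y) (h : lipAt g x₀ ≤ 0) :
    Tendsto (fun x => |g x - g x₀| / dist x x₀) (𝓝[≠] x₀) (𝓝 0) := by
  have hbdd : ∀ r > (0:ℝ), ∀ z ∈ (fun y => |g y - g x₀| / r) '' Metric.closedBall x₀ r, z ≤ K := by
    rintro r hr _ ⟨y, hy, rfl⟩
    rw [div_le_iff₀ hr]
    calc |g y - g x₀| ≤ K * dist y x₀ := hg y x₀
      _ ≤ K * r := by nlinarith [Metric.mem_closedBall.1 hy]
  have hbound : IsBoundedUnder (· ≤ ·) (𝓝[>] (0:ℝ))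
      (fun r : ℝ => sSup ((fun y => |g y - g x₀| / r) '' Metric.closedBall x₀ r)) := by
    refine ⟨K, Filter.eventually_map.2 ?_⟩
    filter_upwards [self_mem_nhdsWithin] with r hr
    exact Real.sSup_le (hbdd r hr) hK
  have hdist : Tendsto (fun x => dist x x₀) (𝓝[≠] x₀) (𝓝[>] 0) := by
    apply tendsto_nhdsWithin_of_tendsto_nhds_of_eventually_within
    · exact tendsto_nhdsWithin_of_tendsto_nhds
        ((continuous_id.dist continuous_const).tendsto' x₀ 0 (by simp))
    · filter_upwards [self_mem_nhdsWithin] with x hx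
      exact dist_pos.2 hx
  rw [NormedAddCommGroup.tendsto_nhds_zero]
  intro ε hε
  have hlt : lipAt g x₀ < ε := lt_of_le_of_lt h hε
  have hev : ∀ᶠ r in 𝓝[>] (0:ℝ),
      sSup ((fun y => |g y - g x₀| / r) '' Metric.closedBall x₀ r) < ε :=
    Filter.eventually_lt_of_limsup_lt hlt hbound
  filter_upwards [hdist.eventually hev, self_mem_nhdsWithin] with x hx hne
  have hd : 0 < dist x x₀ := dist_pos.2 hne
  have hmem : |g x - g x₀| / dist x x₀ ∈
      (fun y => |g y - g x₀| / dist x x₀) '' Metric.closedBall x₀ (dist x x₀) :=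
    ⟨x, Metric.mem_closedBall.2 le_rfl, rfl⟩
  have hBdd : BddAbove ((fun y => |g y - g x₀| / dist x x₀) '' Metric.closedBall x₀ (dist x x₀)) :=
    ⟨K, fun z hz => hbdd _ hd z hz⟩
  have h2 : |g x - g x₀| / dist x x₀ < ε := lt_of_le_of_lt (le_csSup hBdd hmem) hx
  simpa [abs_of_nonneg (div_nonneg (abs_nonneg _) hd.le)] using h2

private lemma inner_snoc {n : ℕ} (v : E n) (t : ℝ) (D : E (n+1)) :
    ⟪(WithLp.equiv 2 (Fin (n + 1) → ℝ)).symm (Fin.snoc (WithLp.equiv 2 (Fin n → ℝ) v) t), D⟫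
    = ⟪v, (WithLp.equiv 2 (Fin n → ℝ)).symm (fun i => D i.castSucc)⟫ + t * D (Fin.last n) := by
  simp only [PiLp.inner_apply, RCLike.inner_apply, conj_trivial]
  rw [Fin.sum_univ_castSucc]
  simp [Fin.snoc_castSucc, Fin.snoc_last, WithLp.equiv_symm_apply, WithLp.ofLp_toLp, WithLp.equiv_apply, mul_comm]

/-- If `x₀ ∈ ind φ` and the Lipschitz function `f` is not differentiable
with respect to `φ` at `x₀`, then `x₀ ∈ ind (φ, f)`. -/
theorem mem_ind_pair_of_not_diff {n : ℕ} (φ : X → E n) (hφ : ∃ K, LipschitzWith K φ)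
    (f : X → ℝ) (hf : ∃ K, LipschitzWith K f) (x₀ : X) (hx₀ : x₀ ∈ indSet φ)
    (hnd : ¬ DiffWrtAt φ f x₀) :
    x₀ ∈ indSet (fun x => (WithLp.equiv 2 (Fin (n + 1) → ℝ)).symm
      (Fin.snoc (WithLp.equiv 2 (Fin n → ℝ) (φ x)) (f x))) := by
  obtain ⟨Kφ, hKφ⟩ := hφ
  obtain ⟨Kf, hKf⟩ := hf
  intro D hD
  by_contra hcon
  push_neg at hcon
  set w : E n := (WithLp.equiv 2 (Fin n → ℝ)).symm (fun i => D i.castSucc) with hwdef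
  set a : ℝ := D (Fin.last n) with hadef
  set g : X → ℝ := fun y => ⟪φ y, w⟫ + f y * a with hgdef
  have hcon' : lipAt g x₀ ≤ 0 := by
    have hgeq : (fun y : X => ⟪(WithLp.equiv 2 (Fin (n + 1) → ℝ)).symm
        (Fin.snoc (WithLp.equiv 2 (Fin n → ℝ) (φ y)) (f y)), D⟫) = g :=
      funext fun y => inner_snoc (φ y) (f y) D
    calc lipAt g x₀ = lipAt (fun y : X => ⟪(WithLp.equiv 2 (Fin (n + 1) → ℝ)).symm
          (Fin.snoc (WithLp.equiv 2 (Fin n → ℝ) (φ y)) (f y)), D⟫) x₀ := by rw [hgeq]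
      _ ≤ 0 := hcon
  have hnormsq : ‖w‖ ^ 2 + a ^ 2 = 1 := by
    have h1 : ⟪D, D⟫ = ⟪w, w⟫ + a * a := by
      simp only [PiLp.inner_apply, RCLike.inner_apply, conj_trivial, hwdef,
        WithLp.equiv_symm_apply, WithLp.ofLp_toLp]
      rw [Fin.sum_univ_castSucc]
    have h2 : ⟪D, D⟫ = ‖D‖ ^ 2 := real_inner_self_eq_norm_sq D
    have h3 : ⟪w, w⟫ = ‖w‖ ^ 2 := real_inner_self_eq_norm_sq w
    rw [h2, h3, hD] at h1
    nlinarith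
  rcases eq_or_ne a 0 with ha0 | ha0
  · -- then ‖w‖ = 1 and g = ⟪φ ·, w⟫, contradicting x₀ ∈ ind φ
    have hw1 : ‖w‖ = 1 := by
      have h4 : (‖w‖ - 1) * (‖w‖ + 1) = 0 := by nlinarith
      rcases mul_eq_zero.1 h4 with h | h
      · linarith
      · linarith [norm_nonneg w]
    have hpos := hx₀ w hw1
    have : lipAt (fun y => ⟪φ y, w⟫) x₀ ≤ 0 := by
      have : g = fun y => ⟪φ y, w⟫ := by
        funext y; rw [hgdef]; simp [ha0]
      rw [← this]; exact hcon'
    linarith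
  · -- a ≠ 0 : f is differentiable with respect to φ at x₀, contradiction
    exfalso; apply hnd
    -- Lipschitz bound for g
    set K : ℝ := ‖w‖ * Kφ + |a| * Kf with hKdef
    have hK : 0 ≤ K := by positivity
    have hgLip : ∀ x y, |g x - g y| ≤ K * dist x y := by
      intro x y
      have e1 : g x - g y = ⟪φ x - φ y, w⟫ + (f x - f y) * a := by
        rw [hgdef]; simp [inner_sub_left]; ring
      calc |g x - g y| ≤ |⟪φ x - φ y, w⟫| + |(f x - f y) * a| := by rw [e1]; exact abs_add_le _ _
        _ ≤ ‖φ x - φ y‖ * ‖w‖ + |f x - f y| * |a| := by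
            gcongr
            · exact abs_real_inner_le_norm _ _
            · rw [abs_mul]
        _ ≤ ((Kφ : ℝ) * dist x y) * ‖w‖ + ((Kf : ℝ) * dist x y) * |a| := by
            gcongr
            · rw [← dist_eq_norm]; exact hKφ.dist_le_mul x y
            · rw [← Real.dist_eq]; exact hKf.dist_le_mul x y
        _ = K * dist x y := by rw [hKdef]; ring
    have ht := tendsto_of_lipAt_le_zero g x₀ K hK hgLip hcon'
    -- candidate derivative
    set L₀ : E n →ₗ[ℝ] ℝ := (-a⁻¹) • (innerSL ℝ w).toLinearMap with hL₀def
    have hL₀app : ∀ v : E n, L₀ v = -a⁻¹ * ⟪v, w⟫ := by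
      intro v
      rw [hL₀def]
      simp only [LinearMap.smul_apply, ContinuousLinearMap.coe_coe, innerSL_apply_apply, smul_eq_mul]
      rw [real_inner_comm]
    have hkey : ∀ x, f x - f x₀ - L₀ (φ x - φ x₀) = a⁻¹ * (g x - g x₀) := by
      intro x
      rw [hL₀app, inner_sub_left, hgdef]
      field_simp
      ring
    have hex : Tendsto (fun x => |f x - f x₀ - L₀ (φ x - φ x₀)| / dist x x₀)
        (𝓝[≠] x₀) (𝓝 0) := by
      have heq : (fun x => |f x - f x₀ - L₀ (φ x - φ x₀)| / dist x x₀)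
          = fun x => |a|⁻¹ * (|g x - g x₀| / dist x x₀) := by
        funext x; rw [hkey x, abs_mul, abs_inv]; ring
      rw [heq]
      simpa using ht.const_mul |a|⁻¹
    refine ⟨L₀, hex, ?_⟩
    intro L' hL'
    -- difference has vanishing directional quotients
    have hM : Tendsto (fun x => |(L' - L₀) (φ x - φ x₀)| / dist x x₀) (𝓝[≠] x₀) (𝓝 0) := by
      apply squeeze_zero (fun x => div_nonneg (abs_nonneg _) dist_nonneg)
        (g := fun x => |f x - f x₀ - L₀ (φ x - φ x₀)| / dist x x₀
          + |f x - f x₀ - L' (φ x - φ x₀)| / dist x x₀)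
      · intro x
        have e2 : (L' - L₀) (φ x - φ x₀)
            = (f x - f x₀ - L₀ (φ x - φ x₀)) - (f x - f x₀ - L' (φ x - φ x₀)) := by
          simp only [LinearMap.sub_apply]; ring
        rw [e2, ← add_div]
        have htri : ∀ u v : ℝ, |u - v| ≤ |u| + |v| := fun u v => by
          rw [sub_eq_add_neg]
          exact (abs_add_le u (-v)).trans (by rw [abs_neg])
        rcases eq_or_lt_of_le (dist_nonneg (x := x) (y := x₀)) with hd | hd
        · rw [← hd]; simp
        · exact div_le_div_of_nonneg_right (htri _ _) hd.le
      · simpa using hex.add hL'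
    -- realize L' - L₀ as an inner product and use x₀ ∈ ind φ
    set c : E n := (InnerProductSpace.toDual ℝ (E n)).symm
      (LinearMap.toContinuousLinearMap (L' - L₀)) with hcdef
    have hc : ∀ v : E n, ⟪c, v⟫ = (L' - L₀) v := fun v => by
      rw [hcdef, InnerProductSpace.toDual_symm_apply]; rfl
    have hc0 : c = 0 := by
      by_contra h0
      have hnc : 0 < ‖c‖ := norm_pos_iff.2 h0
      have hD' : ‖(‖c‖⁻¹ • c : E n)‖ = 1 := by
        rw [norm_smul, norm_inv, norm_norm, inv_mul_cancel₀ hnc.ne']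
      have h1 := hx₀ (‖c‖⁻¹ • c) hD'
      have h2 : lipAt (fun y => ⟪φ y, ‖c‖⁻¹ • c⟫) x₀ ≤ 0 := by
        apply lipAt_le_zero_of_tendsto
        have heq2 : (fun x => |⟪φ x, ‖c‖⁻¹ • c⟫ - ⟪φ x₀, ‖c‖⁻¹ • c⟫| / dist x x₀)
            = fun x => ‖c‖⁻¹ * (|(L' - L₀) (φ x - φ x₀)| / dist x x₀) := by
          funext x
          have e3 : ⟪φ x, ‖c‖⁻¹ • c⟫ - ⟪φ x₀, ‖c‖⁻¹ • c⟫ = ‖c‖⁻¹ * ((L' - L₀) (φ x - φ x₀)) := by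
            rw [← hc (φ x - φ x₀), real_inner_smul_right, real_inner_smul_right,
              inner_sub_right, real_inner_comm c (φ x), real_inner_comm c (φ x₀)]
            ring
          rw [e3, abs_mul, abs_inv, abs_norm]; ring
        rw [heq2]
        simpa using hM.const_mul ‖c‖⁻¹
      linarith
    have hMzero : L' - L₀ = 0 := by
      ext v
      have := hc v
      rw [hc0] at this
      simpa using this.symm
    exact sub_eq_zero.1 hMzero


end BKO
end
end
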